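/- arXiv:2301.00121 — 8 statements merged into one kernel-verified Lean document; each statement's English description precedes it below -/
import Mathlib

section
/- With A = A(q,ε) and A* = diag(1,q,…,q^d) as in CBP(F;d,q,ε), define P = P(q,ε) ∈ Mat_{d+1}(F) with (i,j)-entry q^{ij}·(εq^{-i};q)_j/(εq;q)_j, where (a;q)_r = ∏_{ℓ=0}^{r−1}(1−aq^ℓ). Then A(q,ε)·P(q,ε) = P(q,ε)·A*(q^{-1}) and A*(q)·P(q,ε) = P(q,ε)·A(q^{-1},ε), where A*(q^{-1}) = diag(1,q^{-1},…,q^{-d}). -/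
/-- The q-Pochhammer symbol `(a;q)_r = (1-a)(1-aq)⋯(1-aq^{r-1})`. -/
def qpoch {F : Type*} [Field F] (a q : F) (r : ℕ) : F :=
  ∏ ℓ ∈ Finset.range r, (1 - a * q ^ ℓ)

/-- The matrix `A(q,ε)` of the circular bidiagonal pair `CBP(F;d,q,ε)`. -/
def cbMat {F : Type*} [Field F] (d : ℕ) (q ε : F) : Matrix (Fin (d + 1)) (Fin (d + 1)) F :=
  Matrix.of fun i j : Fin (d + 1) =>
    if i.val = j.val then q⁻¹ ^ i.val * ε
    else if i.val = j.val + 1 then 1 - q⁻¹ ^ i.val * ε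
    else if i.val = 0 ∧ j.val = d then 1 - ε else 0

/-- The matrix `P(q,ε)` with entries `q^{ij} (εq^{-i};q)_j / (εq;q)_j`. -/
def Pmat {F : Type*} [Field F] (d : ℕ) (q ε : F) : Matrix (Fin (d + 1)) (Fin (d + 1)) F :=
  Matrix.of fun i j : Fin (d + 1) =>
    q ^ (i.val * j.val) * qpoch (ε * q⁻¹ ^ i.val) q j.val / qpoch (ε * q) q j.val

lemma qpoch_zero {F : Type*} [Field F] (a q : F) : qpoch a q 0 = 1 :=
  Finset.prod_range_zero _

lemma qpoch_succ {F : Type*} [Field F] (a q : F) (j : ℕ) :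
    qpoch a q (j + 1) = qpoch a q j * (1 - a * q ^ j) :=
  Finset.prod_range_succ _ _

lemma qpoch_succ' {F : Type*} [Field F] (a q : F) (j : ℕ) :
    qpoch a q (j + 1) = (1 - a) * qpoch (a * q) q j := by
  unfold qpoch
  rw [Finset.prod_range_succ']
  simp only [pow_zero, mul_one]
  rw [mul_comm]
  congr 1
  exact Finset.prod_congr rfl fun x _ => by ring

lemma qpoch_key {F : Type*} [Field F] (a q : F) (j : ℕ) :
    (1 - a) * qpoch (a * q) q j = qpoch a q j * (1 - a * q ^ j) := by
  rw [← qpoch_succ', qpoch_succ]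

lemma two_term_sum {M : Type*} [AddCommMonoid M] {n : ℕ} (f : Fin n → M) (a b : Fin n)
    (hab : a ≠ b) (h : ∀ c, c ≠ a → c ≠ b → f c = 0) :
    ∑ k, f k = f a + f b := by
  classical
  rw [← Finset.sum_subset (Finset.subset_univ ({a, b} : Finset (Fin n))) (fun x _ hx => by
    simp only [Finset.mem_insert, Finset.mem_singleton, not_or] at hx
    exact h x hx.1 hx.2)]
  rw [Finset.sum_pair hab]

theorem stmt3 {F : Type*} [Field F] (d : ℕ) (hd : 1 ≤ d) (q ε : F)
    (hq : IsPrimitiveRoot q (d + 1))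
    (hε : ∀ i : ℕ, i ≤ d → ε ≠ q ^ i) :
    cbMat d q ε * Pmat d q ε =
        Pmat d q ε * Matrix.diagonal (fun i : Fin (d + 1) => q⁻¹ ^ i.val) ∧
      Matrix.diagonal (fun i : Fin (d + 1) => q ^ i.val) * Pmat d q ε =
        Pmat d q ε * cbMat d q⁻¹ ε := by
  obtain ⟨e, rfl⟩ : ∃ e, d = e + 1 := ⟨d - 1, by omega⟩
  have hq1 : q ^ (e + 1 + 1) = 1 := hq.pow_eq_one
  have hqne : q ≠ 0 := by
    intro h
    rw [h, zero_pow (by omega : e + 1 + 1 ≠ 0)] at hq1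
    exact zero_ne_one hq1
  have hinv : q⁻¹ = q ^ (e + 1) := inv_eq_of_mul_eq_one_right (by rw [← pow_succ']; exact hq1)
  have hnz : ∀ m : ℕ, ε * q ^ m ≠ 1 := by
    intro m hm
    rw [pow_eq_pow_mod m hq1] at hm
    set r := m % (e + 1 + 1) with hr
    have hrlt : r < e + 1 + 1 := Nat.mod_lt _ (by omega)
    rcases Nat.eq_zero_or_pos r with h0 | hpos
    · rw [h0, pow_zero, mul_one] at hm
      exact hε 0 (by omega) (by simpa using hm)
    · apply hε (e + 1 + 1 - r) (by omega)
      have hqr : q ^ r ≠ 0 := pow_ne_zero _ hqne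
      have h2 : q ^ (e + 1 + 1 - r) * q ^ r = 1 := by
        rw [← pow_add, Nat.sub_add_cancel (by omega)]
        exact hq1
      exact mul_right_cancel₀ hqr (hm.trans h2.symm)
  have h1 : ∀ m : ℕ, (1 : F) - ε * q ^ m ≠ 0 := fun m => sub_ne_zero.mpr (Ne.symm (hnz m))
  have hpn : ∀ j : ℕ, qpoch (ε * q) q j ≠ 0 := by
    intro j
    unfold qpoch
    rw [Finset.prod_ne_zero_iff]
    intro ℓ _
    exact fun h0 => h1 (ℓ + 1) (by linear_combination h0)
  have hcyc : ∀ m : ℕ, q ^ ((e + 1) * m) * q ^ m = 1 := by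
    intro m
    rw [← pow_add, show (e + 1) * m + m = (e + 1 + 1) * m by ring, pow_mul, hq1, one_pow]
  have hshift : ∀ m : ℕ, qpoch (ε * q ^ m) q (e + 1 + 1) = qpoch ε q (e + 1 + 1) := by
    intro m
    induction m with
    | zero => rw [pow_zero, mul_one]
    | succ k ih =>
      have h := qpoch_key (ε * q ^ k) q (e + 1 + 1)
      rw [mul_assoc, hq1, mul_one] at h
      rw [show ε * q ^ (k + 1) = ε * (q ^ k * q) by rw [pow_succ], ← ih]
      exact mul_left_cancel₀ (h1 k) (by rw [h]; ring)
  have hfull : ∀ m : ℕ, qpoch (ε * q ^ m) q (e + 1) * (1 - ε * q ^ m * q ^ (e + 1)) =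
      (1 - ε) * qpoch (ε * q) q (e + 1) := by
    intro m
    rw [← qpoch_succ, hshift m, qpoch_succ']
  constructor
  · ext i j
    rw [Matrix.mul_apply, Matrix.mul_diagonal]
    obtain ⟨jv, hjv⟩ := j
    obtain ⟨iv, hiv⟩ := i
    rcases Nat.eq_zero_or_pos iv with h0 | hpos
    · subst h0
      rw [two_term_sum (fun k => cbMat (e+1) q ε ⟨0, hiv⟩ k * Pmat (e+1) q ε k ⟨jv, hjv⟩)
        ⟨0, hiv⟩ ⟨e+1, by omega⟩ (by simp [Fin.ext_iff]) ?_]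
      · simp only [cbMat, Pmat, Matrix.of_apply]
        simp only [if_true]
        rw [if_neg (show ¬(0:ℕ) = e+1 by omega), if_neg (show ¬(0:ℕ) = e+1+1 by omega),
          if_pos (⟨trivial, trivial⟩ : True ∧ True)]
        rw [hinv]
        simp only [← pow_mul, pow_zero, mul_one, one_mul, Nat.zero_mul, Nat.mul_zero]
        have harg : ε * q ^ ((e+1) * (e+1)) = ε * q := by
          rw [show (e+1)*(e+1) = (e+1+1)*e + 1 by ring, pow_add, pow_mul, hq1, one_pow, one_mul,
            pow_one]
        rw [harg]
        have hkey := qpoch_key ε q jv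
        have hc := hcyc jv
        field_simp
        rw [div_eq_div_iff (hpn jv) (hpn jv)]
        linear_combination (q ^ ((e+1)*jv) * qpoch (ε*q) q jv) * hkey -
          (ε * qpoch ε q jv * qpoch (ε*q) q jv) * hc
      · intro c hc1 hc2
        obtain ⟨cv, hcv⟩ := c
        simp only [Ne, Fin.mk.injEq] at hc1 hc2
        show cbMat (e+1) q ε ⟨0, hiv⟩ ⟨cv, hcv⟩ * Pmat (e+1) q ε ⟨cv, hcv⟩ ⟨jv, hjv⟩ = 0
        have hz : cbMat (e+1) q ε ⟨0, hiv⟩ ⟨cv, hcv⟩ = 0 := by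
          simp only [cbMat, Matrix.of_apply]
          rw [if_neg (by omega), if_neg (by omega), if_neg (by omega)]
        rw [hz, zero_mul]
    · obtain ⟨m, rfl⟩ : ∃ m, iv = m + 1 := ⟨iv - 1, by omega⟩
      rw [two_term_sum (fun k => cbMat (e+1) q ε ⟨m+1, hiv⟩ k * Pmat (e+1) q ε k ⟨jv, hjv⟩)
        ⟨m+1, hiv⟩ ⟨m, by omega⟩ (by simp [Fin.ext_iff]) ?_]
      · simp only [cbMat, Pmat, Matrix.of_apply]
        simp only [if_true]
        rw [if_neg (show ¬m+1 = m by omega), hinv]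
        simp only [← pow_mul]
        have harg : ε * q ^ ((e+1) * (m+1)) * q = ε * q ^ ((e+1) * m) := by
          rw [mul_assoc, ← pow_succ,
            show (e+1)*(m+1)+1 = (e+1)*m + (e+1+1) by ring, pow_add, hq1, mul_one]
        have R := qpoch_key (ε * q ^ ((e+1) * (m+1))) q jv
        rw [harg] at R
        have hc := hcyc jv
        field_simp
        rw [div_eq_div_iff (hpn jv) (hpn jv)]
        rw [mul_comm (q ^ ((e+1)*(m+1))) ε]
        linear_combination (q ^ (m*jv) * qpoch (ε*q) q jv) * R -
          (q ^ (m*jv) * qpoch (ε * q ^ ((e+1)*(m+1))) q jv * qpoch (ε*q) q jv) * hc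
      · intro c hc1 hc2
        obtain ⟨cv, hcv⟩ := c
        simp only [Ne, Fin.mk.injEq] at hc1 hc2
        show cbMat (e+1) q ε ⟨m+1, hiv⟩ ⟨cv, hcv⟩ * Pmat (e+1) q ε ⟨cv, hcv⟩ ⟨jv, hjv⟩ = 0
        have hz : cbMat (e+1) q ε ⟨m+1, hiv⟩ ⟨cv, hcv⟩ = 0 := by
          simp only [cbMat, Matrix.of_apply]
          rw [if_neg (by omega), if_neg (by omega), if_neg (by omega)]
        rw [hz, zero_mul]
  · ext i j
    rw [Matrix.diagonal_mul, Matrix.mul_apply]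
    obtain ⟨jv, hjv⟩ := j
    obtain ⟨iv, hiv⟩ := i
    rcases Nat.lt_or_ge jv (e+1) with hlt | hge
    · rw [two_term_sum (fun k => Pmat (e+1) q ε ⟨iv, hiv⟩ k * cbMat (e+1) q⁻¹ ε k ⟨jv, hjv⟩)
        ⟨jv, hjv⟩ ⟨jv+1, by omega⟩ (by simp [Fin.ext_iff]) ?_]
      · simp only [cbMat, Pmat, Matrix.of_apply, inv_inv]
        simp only [if_true]
        rw [if_neg (show ¬jv + 1 = jv by omega), hinv]
        simp only [← pow_mul]
        rw [qpoch_succ (ε * q ^ ((e+1) * iv)) q jv, qpoch_succ (ε * q) q jv]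
        have hu : q ^ ((e+1) * iv) = (q ^ iv)⁻¹ := eq_inv_of_mul_eq_one_left (hcyc iv)
        rw [hu]
        have hnz2 : (1:F) - ε * q * q ^ jv ≠ 0 := fun h0 => h1 (jv+1) (by linear_combination h0)
        have hiv0 : q ^ iv ≠ 0 := pow_ne_zero _ hqne
        have hP := hpn jv
        field_simp
        ring
      · intro c hc1 hc2
        obtain ⟨cv, hcv⟩ := c
        simp only [Ne, Fin.mk.injEq] at hc1 hc2
        show Pmat (e+1) q ε ⟨iv, hiv⟩ ⟨cv, hcv⟩ * cbMat (e+1) q⁻¹ ε ⟨cv, hcv⟩ ⟨jv, hjv⟩ = 0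
        have hz : cbMat (e+1) q⁻¹ ε ⟨cv, hcv⟩ ⟨jv, hjv⟩ = 0 := by
          simp only [cbMat, Matrix.of_apply]
          rw [if_neg (by omega), if_neg (by omega), if_neg (by omega)]
        rw [hz, mul_zero]
    · obtain rfl : jv = e + 1 := by omega
      rw [two_term_sum (fun k => Pmat (e+1) q ε ⟨iv, hiv⟩ k * cbMat (e+1) q⁻¹ ε k ⟨e+1, hjv⟩)
        ⟨e+1, hjv⟩ ⟨0, by omega⟩ (by simp [Fin.ext_iff]) ?_]
      · simp only [cbMat, Pmat, Matrix.of_apply, inv_inv]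
        simp only [if_true]
        rw [if_neg (show ¬(0:ℕ) = e+1 by omega), if_neg (show ¬(0:ℕ) = e+1+1 by omega),
          if_pos (⟨trivial, trivial⟩ : True ∧ True), hinv]
        simp only [← pow_mul, Nat.mul_zero, pow_zero, qpoch_zero, div_one, mul_one, one_mul]
        rw [show iv * (e+1) = (e+1) * iv from Nat.mul_comm _ _]
        have hf := hfull ((e+1) * iv)
        have hc := hcyc iv
        have hP := hpn (e+1)
        field_simp
        rw [mul_comm (q ^ ((e+1)*iv)) ε]
        linear_combination hf + qpoch (ε * q ^ ((e+1) * iv)) q (e+1) * hc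
      · intro c hc1 hc2
        obtain ⟨cv, hcv⟩ := c
        simp only [Ne, Fin.mk.injEq] at hc1 hc2
        show Pmat (e+1) q ε ⟨iv, hiv⟩ ⟨cv, hcv⟩ * cbMat (e+1) q⁻¹ ε ⟨cv, hcv⟩ ⟨e+1, hjv⟩ = 0
        have hz : cbMat (e+1) q⁻¹ ε ⟨cv, hcv⟩ ⟨e+1, hjv⟩ = 0 := by
          simp only [cbMat, Matrix.of_apply]
          rw [if_neg (by omega), if_neg (by omega), if_neg (by omega)]
        rw [hz, mul_zero]
end

section
/- For d ≥ 0, q a primitive (d+1)-th root of unity in F, and ε ∈ F not among 1,q,…,q^d: ∑_{j=0}^{d} (ε;q)_j/(εq;q)_j = (q;q)_d/(εq;q)_d. -/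
open Polynomial Finset

lemma auxP {F : Type*} [Field F] {n : ℕ} {q : F} (hn : 0 < n) (hq : IsPrimitiveRoot q n) :
    ∏ i ∈ Finset.range n, ((Polynomial.X : F[X]) - Polynomial.C (q ^ i)) = X ^ n - 1 := by
  haveI : NeZero n := ⟨hn.ne'⟩
  rw [X_pow_sub_one_eq_prod hn hq]
  refine Finset.prod_nbij (fun i => q ^ i) ?_ ?_ ?_ ?_
  · intro i _
    exact (Polynomial.mem_nthRootsFinset hn 1).2
      (by rw [← pow_mul, mul_comm, pow_mul, hq.pow_eq_one, one_pow])
  · intro i hi j hj h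
    exact hq.pow_inj (by simpa using hi) (by simpa using hj) h
  · intro ζ hζ
    obtain ⟨i, hi, hqi⟩ := hq.eq_pow_of_pow_eq_one ((Polynomial.mem_nthRootsFinset hn 1).1 hζ)
    exact ⟨i, by simpa using hi, hqi⟩
  · intro i _; rfl

lemma auxEval {F : Type*} [Field F] {n : ℕ} {q : F} (hn : 0 < n) (hq : IsPrimitiveRoot q n)
    (x : F) : ∏ i ∈ Finset.range n, (x - q ^ i) = x ^ n - 1 := by
  have := congrArg (Polynomial.eval x) (auxP hn hq)
  simpa [Polynomial.eval_prod] using this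

lemma auxProdOneSub {F : Type*} [Field F] {n : ℕ} {q : F} (hn : 0 < n)
    (hq : IsPrimitiveRoot q n) (x : F) :
    ∏ i ∈ Finset.range n, (1 - x * q ^ i) = 1 - x ^ n := by
  rcases eq_or_ne x 0 with rfl | hx
  · simp [hn.ne']
  · have h1 : ∀ i ∈ Finset.range n, (1 - x * q ^ i) = x * (x⁻¹ - q ^ i) := by
      intro i _
      field_simp
    rw [Finset.prod_congr rfl h1, Finset.prod_mul_distrib, Finset.prod_const,
      Finset.card_range, auxEval hn hq x⁻¹]
    rw [inv_pow, mul_sub, mul_inv_cancel₀ (pow_ne_zero _ hx), mul_one]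

lemma auxProdQ {F : Type*} [Field F] {d : ℕ} {q : F} (hq : IsPrimitiveRoot q (d + 1)) :
    ∏ ℓ ∈ Finset.range d, (1 - q ^ (ℓ + 1)) = (d + 1 : F) := by
  have hP := auxP (Nat.succ_pos d) hq
  rw [Finset.prod_range_succ'] at hP
  have hg : (∑ k ∈ Finset.range (d + 1), (Polynomial.X : F[X]) ^ k) * (X - 1) = X ^ (d+1) - 1 :=
    geom_sum_mul _ _
  have hX1 : (Polynomial.X : F[X]) - 1 ≠ 0 := by
    simpa using Polynomial.X_sub_C_ne_zero (1 : F)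
  have hcancel : (∏ i ∈ Finset.range d, ((Polynomial.X : F[X]) - Polynomial.C (q ^ (i + 1)))) =
      ∑ k ∈ Finset.range (d + 1), (Polynomial.X : F[X]) ^ k := by
    apply mul_right_cancel₀ hX1
    rw [hg, ← hP]; simp
  have := congrArg (Polynomial.eval 1) hcancel
  simpa [Polynomial.eval_prod] using this

theorem stmt5 {F : Type*} [Field F] (d : ℕ) (q ε : F)
    (hq : IsPrimitiveRoot q (d + 1))
    (hε : ∀ i : ℕ, i ≤ d → ε ≠ q ^ i) :
    ∑ j ∈ Finset.range (d + 1), qpoch ε q j / qpoch (ε * q) q j =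
      qpoch q q d / qpoch (ε * q) q d := by
  set n := d + 1 with hn
  have hn0 : 0 < n := Nat.succ_pos d
  have hq1 : q ^ n = 1 := hq.pow_eq_one
  have hqmod : ∀ k : ℕ, q ^ k = q ^ (k % n) := by
    intro k
    conv_lhs => rw [← Nat.div_add_mod k n, pow_add, pow_mul, hq1, one_pow, one_mul]
  have hne : ∀ m : ℕ, (1 : F) - ε * q ^ m ≠ 0 := by
    intro m h
    have h1 : ε * q ^ m = 1 := by linear_combination -h
    have hkey : q ^ m * q ^ (m * d) = 1 := by
      rw [← pow_add, show m + m * d = n * m by ring, pow_mul, hq1, one_pow]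
    have h2 : ε = q ^ (m * d) := by
      calc ε = ε * (q ^ m * q ^ (m * d)) := by rw [hkey, mul_one]
        _ = (ε * q ^ m) * q ^ (m * d) := by ring
        _ = q ^ (m * d) := by rw [h1, one_mul]
    exact hε ((m * d) % n) (Nat.lt_succ_iff.mp (Nat.mod_lt _ hn0)) (h2.trans (hqmod _))
  have hεn : (1 : F) - ε ^ n ≠ 0 := by
    rw [← auxProdOneSub hn0 hq ε]
    exact Finset.prod_ne_zero_iff.2 fun i _ => hne i
  have hε1 : (1 : F) - ε ≠ 0 := by
    have h := hε 0 (Nat.zero_le d)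
    simp only [pow_zero] at h
    exact sub_ne_zero_of_ne h.symm
  -- nonvanishing of qpoch (ε*q) q j
  have hpne : ∀ j : ℕ, qpoch (ε * q) q j ≠ 0 := by
    intro j
    refine Finset.prod_ne_zero_iff.2 fun ℓ _ => ?_
    have : ε * q * q ^ ℓ = ε * q ^ (ℓ + 1) := by ring
    rw [this]
    exact hne (ℓ + 1)
  -- telescoping ratio
  have hratio : ∀ j : ℕ, qpoch ε q j / qpoch (ε * q) q j = (1 - ε) / (1 - ε * q ^ j) := by
    intro j
    have key : (1 - ε) * qpoch (ε * q) q j = qpoch ε q j * (1 - ε * q ^ j) := by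
      have h1 : qpoch ε q (j + 1) = qpoch ε q j * (1 - ε * q ^ j) := Finset.prod_range_succ _ _
      have h2 : qpoch ε q (j + 1) = (1 - ε) * qpoch (ε * q) q j := by
        rw [qpoch, Finset.prod_range_succ']
        simp only [pow_zero, mul_one, qpoch]
        rw [mul_comm]
        congr 1
        exact Finset.prod_congr rfl fun ℓ _ => by ring_nf
      rw [← h2, h1]
    rw [div_eq_div_iff (hpne j) (hne j)]; linear_combination -key
  -- geometric expansion
  have hgeom : ∀ j : ℕ, (1 - ε * q ^ j) * ∑ k ∈ Finset.range n, (ε * q ^ j) ^ k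
      = 1 - ε ^ n := by
    intro j
    have := geom_sum_mul (ε * q ^ j) n
    have hpow : (ε * q ^ j) ^ n = ε ^ n := by
      rw [mul_pow, ← pow_mul, mul_comm j n, pow_mul, hq1, one_pow, mul_one]
    calc (1 - ε * q ^ j) * ∑ k ∈ Finset.range n, (ε * q ^ j) ^ k
        = -(((∑ k ∈ Finset.range n, (ε * q ^ j) ^ k) * (ε * q ^ j - 1))) := by ring
      _ = -((ε * q ^ j) ^ n - 1) := by rw [this]
      _ = 1 - ε ^ n := by rw [hpow]; ring
  -- double sum evaluates to n
  have hdouble : ∑ j ∈ Finset.range n, ∑ k ∈ Finset.range n, (ε * q ^ j) ^ k = (n : F) := by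
    have hterm : ∀ j k : ℕ, (ε * q ^ j) ^ k = ε ^ k * (q ^ k) ^ j := by
      intro j k; rw [mul_pow, ← pow_mul, ← pow_mul, mul_comm j k]
    simp only [hterm]
    rw [Finset.sum_comm]
    have hinner : ∀ k ∈ Finset.range n, (∑ j ∈ Finset.range n, ε ^ k * (q ^ k) ^ j)
        = if k = 0 then (n : F) else 0 := by
      intro k hk
      rcases eq_or_ne k 0 with rfl | hk0
      · simp
      · rw [← Finset.mul_sum, if_neg hk0]
        have hqk : q ^ k ≠ 1 :=
          hq.pow_ne_one_of_pos_of_lt hk0 (Finset.mem_range.1 hk)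
        rw [geom_sum_eq hqk]
        have : (q ^ k) ^ n = 1 := by rw [← pow_mul, mul_comm k n, pow_mul, hq1, one_pow]
        rw [this]
        simp
    rw [Finset.sum_congr rfl hinner]
    simp
  -- now compute both sides
  have hLHS : ∑ j ∈ Finset.range n, qpoch ε q j / qpoch (ε * q) q j
      = (1 - ε) * (n : F) / (1 - ε ^ n) := by
    rw [Finset.sum_congr rfl fun j _ => hratio j]
    have : ∀ j ∈ Finset.range n, (1 - ε) / (1 - ε * q ^ j)
        = (1 - ε) * (∑ k ∈ Finset.range n, (ε * q ^ j) ^ k) / (1 - ε ^ n) := by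
      intro j _
      rw [eq_div_iff hεn, div_mul_eq_mul_div, div_eq_iff (hne j)]
      linear_combination (ε - 1) * hgeom j
    rw [Finset.sum_congr rfl this, ← Finset.sum_div, ← Finset.mul_sum, hdouble]
  have hqq : qpoch q q d = (n : F) := by
    have := auxProdQ hq
    rw [qpoch]
    rw [Finset.prod_congr rfl fun ℓ _ => by rw [← pow_succ']]
    rw [this]; push_cast [hn]; ring
  have hden : (1 - ε) * qpoch (ε * q) q d = 1 - ε ^ n := by
    have := auxProdOneSub hn0 hq ε
    rw [Finset.prod_range_succ'] at this
    simp only [pow_zero, mul_one] at this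
    rw [← this, mul_comm, qpoch]
    congr 1
    exact Finset.prod_congr rfl fun ℓ _ => by ring_nf
  rw [hLHS, hqq]
  rw [div_eq_div_iff hεn (hpne d), ← hden]
  ring
end

section
/- Let n = d+1 be prime with d ≥ 1, char(F) = n, and γ ∈ F not among 0,1,…,d. Define A = A(γ) ∈ Mat_n(F) by A_{i,i} = i+γ for 0 ≤ i ≤ d, A_{0,d} = −γ, A_{i,i-1} = −i−γ for 1 ≤ i ≤ d, all other entries zero, and A* = diag(0,1,…,d). Then AA* − A*A + A − A* = γI. -/
theorem stmt6 {F : Type*} [Field F] (d : ℕ) (hd : 1 ≤ d)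
    (hprime : Nat.Prime (d + 1)) (hchar : CharP F (d + 1)) (γ : F)
    (hγ : ∀ i : ℕ, i ≤ d → γ ≠ (i : F))
    (A Astar : Matrix (Fin (d + 1)) (Fin (d + 1)) F)
    (hA : A = Matrix.of fun i j : Fin (d + 1) =>
      if i.val = j.val then (i.val : F) + γ
      else if i.val = j.val + 1 then -(i.val : F) - γ
      else if i.val = 0 ∧ j.val = d then -γ else 0)
    (hAstar : Astar = Matrix.diagonal fun i : Fin (d + 1) => (i.val : F)) :
    A * Astar - Astar * A + A - Astar = γ • (1 : Matrix (Fin (d + 1)) (Fin (d + 1)) F) := by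
  subst hA hAstar
  ext i j
  simp only [Matrix.sub_apply, Matrix.add_apply, Matrix.mul_diagonal, Matrix.diagonal_mul,
    Matrix.smul_apply, Matrix.one_apply, Matrix.diagonal_apply, Matrix.of_apply, smul_eq_mul]
  by_cases h1 : i.val = j.val
  · have hij : i = j := Fin.ext h1
    subst hij
    simp only [if_pos rfl, if_pos rfl, if_true]
    ring
  · have hij : ¬ i = j := fun h => h1 (by rw [h])
    simp only [if_neg h1, if_neg hij, mul_zero]
    by_cases h2 : i.val = j.val + 1
    · simp only [if_pos h2]
      have hc : (i.val : F) = (j.val : F) + 1 := by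
        rw [h2]; push_cast; ring
      rw [hc]; ring
    · simp only [if_neg h2]
      by_cases h3 : i.val = 0 ∧ j.val = d
      · simp only [if_pos h3]
        have hc : ((d : ℕ) : F) + 1 = 0 := by
          have := CharP.cast_eq_zero F (d + 1)
          push_cast at this
          linear_combination this
        rw [h3.1, h3.2]
        push_cast
        linear_combination (-γ) * hc
      · simp only [if_neg h3]
        ring
end

section
/- Let A, A* be a circular bidiagonal pair on a finite-dimensional vector space V over F. Then A is multiplicity-free: A is diagonalizable and every eigenspace of A has dimension one. The same holds for A*. -/
/-- A square matrix is circular bidiagonal: nonzero entries only on the diagonal,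
the subdiagonal, and the top-right corner; all subdiagonal entries and the
top-right corner entry are nonzero. -/
def IsCircBidiag {F : Type*} [Field F] {d : ℕ} (M : Matrix (Fin (d + 1)) (Fin (d + 1)) F) : Prop :=
  (∀ i j : Fin (d + 1), M i j ≠ 0 → i = j ∨ i.val = j.val + 1 ∨ (i.val = 0 ∧ j.val = d)) ∧
  (∀ i j : Fin (d + 1), i.val = j.val + 1 → M i j ≠ 0) ∧
  M 0 (Fin.last d) ≠ 0

/-- A circular bidiagonal pair on `V`. -/
def IsCBPair {F V : Type*} [Field F] [AddCommGroup V] [Module F V] (d : ℕ)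
    (A Astar : V →ₗ[F] V) : Prop :=
  (∃ b : Module.Basis (Fin (d + 1)) F V,
    IsCircBidiag (LinearMap.toMatrix b b A) ∧ (LinearMap.toMatrix b b Astar).IsDiag) ∧
  (∃ b : Module.Basis (Fin (d + 1)) F V,
    IsCircBidiag (LinearMap.toMatrix b b Astar) ∧ (LinearMap.toMatrix b b A).IsDiag)


open Module LinearMap

lemma diag_sup_eq_top {F V : Type*} [Field F] [AddCommGroup V] [Module F V]
    {d : ℕ} (A : V →ₗ[F] V) (b : Basis (Fin (d + 1)) F V)
    (hdiag : (LinearMap.toMatrix b b A).IsDiag) :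
    (⨆ μ : F, Module.End.eigenspace A μ) = ⊤ := by
  rw [eq_top_iff, ← b.span_eq]
  apply Submodule.span_le.2
  rintro x ⟨j, rfl⟩
  set M := LinearMap.toMatrix b b A with hM
  have hbj : b j ∈ Module.End.eigenspace A (M j j) := by
    rw [Module.End.mem_eigenspace_iff]
    apply b.repr.injective
    ext i
    rw [map_smul]
    simp only [Finsupp.smul_apply, smul_eq_mul]
    have : b.repr (A (b j)) i = M i j := (LinearMap.toMatrix_apply b b A i j).symm
    rw [this, b.repr_self]
    by_cases h : i = j
    · subst h; simp
    · rw [hdiag h]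
      simp [Finsupp.single_apply, Ne.symm h]
  exact le_iSup (fun μ => Module.End.eigenspace A μ) (M j j) hbj

lemma circ_eigenspace_le_one {F V : Type*} [Field F] [AddCommGroup V] [Module F V]
    {d : ℕ} (A : V →ₗ[F] V) (b : Basis (Fin (d + 1)) F V)
    (hc : IsCircBidiag (LinearMap.toMatrix b b A)) (μ : F) :
    Module.finrank F (Module.End.eigenspace A μ) ≤ 1 := by
  set M := LinearMap.toMatrix b b A with hMdef
  set f : (Module.End.eigenspace A μ) →ₗ[F] F :=
    (Finsupp.lapply (Fin.last d)).comp
      (b.repr.toLinearMap.comp (Module.End.eigenspace A μ).subtype) with hf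
  have hinj : Function.Injective f := by
    rw [← LinearMap.ker_eq_bot, eq_bot_iff]
    rintro ⟨v, hv⟩ hker
    have hvw : A v = μ • v := Module.End.mem_eigenspace_iff.mp hv
    set w : Fin (d+1) → F := fun j => b.repr v j with hw
    have hlast : w (Fin.last d) = 0 := hker
    have hmul : ∀ i, ∑ j, M i j * w j = μ * w i := by
      intro i
      have := LinearMap.toMatrix_mulVec_repr b b A v
      have h2 := congrFun this i
      rw [hvw] at h2
      simp only [Matrix.mulVec, dotProduct] at h2
      simpa using h2
    -- downward induction
    have key : ∀ n, n ≤ d → w ⟨d - n, by omega⟩ = 0 := by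
      intro n
      induction n with
      | zero => intro _; simpa [Fin.last] using hlast
      | succ n ih =>
        intro hn
        have hwi : w ⟨d - n, by omega⟩ = 0 := ih (by omega)
        set i : Fin (d+1) := ⟨d - n, by omega⟩ with hi
        set j₀ : Fin (d+1) := ⟨d - (n+1), by omega⟩ with hj0
        have hij : i.val = j₀.val + 1 := by simp [hi, hj0]; omega
        have hne : j₀ ≠ i := by
          intro h
          have := congrArg Fin.val h
          simp [hi, hj0] at this; omega
        have hzero : ∀ j, j ∉ ({j₀, i} : Finset (Fin (d+1))) → M i j * w j = 0 := by
          intro j hj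
          simp only [Finset.mem_insert, Finset.mem_singleton] at hj
          push_neg at hj
          have : M i j = 0 := by
            by_contra hMij
            rcases hc.1 i j hMij with h | h | h
            · exact hj.2 h.symm
            · exact hj.1 (Fin.ext (by omega))
            · have : i.val = 0 := h.1
              simp [hi] at this; omega
          rw [this, zero_mul]
        have hsum : ∑ j, M i j * w j = M i j₀ * w j₀ + M i i * w i := by
          rw [← Finset.sum_subset (Finset.subset_univ ({j₀, i} : Finset (Fin (d+1))))
            (fun j _ hj => hzero j hj)]
          rw [Finset.sum_insert (by simpa using hne), Finset.sum_singleton]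
        have := hmul i
        rw [hsum, hwi] at this
        simp only [mul_zero, add_zero] at this
        have hM0 : M i j₀ ≠ 0 := hc.2.1 i j₀ hij
        have : w j₀ = 0 := by
          rcases mul_eq_zero.mp this with h | h
          · exact absurd h hM0
          · exact h
        exact this
    have hwall : ∀ i : Fin (d+1), w i = 0 := by
      intro i
      have h1 : i.val ≤ d := by omega
      have := key (d - i.val) (by omega)
      have heq : (⟨d - (d - i.val), by omega⟩ : Fin (d+1)) = i := Fin.ext (by simp; omega)
      rwa [heq] at this
    have : v = 0 := by
      have : b.repr v = 0 := Finsupp.ext fun i => hwall i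
      simpa using b.repr.injective (by simpa using this)
    show (⟨v, hv⟩ : Module.End.eigenspace A μ) ∈ (⊥ : Submodule F _)
    simp [Submodule.mem_bot, Subtype.ext_iff, this]
  calc Module.finrank F (Module.End.eigenspace A μ)
      ≤ Module.finrank F F := LinearMap.finrank_le_finrank_of_injective hinj
    _ = 1 := Module.finrank_self F

theorem stmt11 {F V : Type*} [Field F] [AddCommGroup V] [Module F V]
    [FiniteDimensional F V] (d : ℕ) (hdim : Module.finrank F V = d + 1)
    (A Astar : V →ₗ[F] V) (hpair : IsCBPair d A Astar) :
    ((⨆ μ : F, Module.End.eigenspace A μ) = ⊤ ∧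
      ∀ μ : F, Module.End.HasEigenvalue A μ →
        Module.finrank F (Module.End.eigenspace A μ) = 1) ∧
    ((⨆ μ : F, Module.End.eigenspace Astar μ) = ⊤ ∧
      ∀ μ : F, Module.End.HasEigenvalue Astar μ →
        Module.finrank F (Module.End.eigenspace Astar μ) = 1) := by
  obtain ⟨⟨b1, hc1, hd1⟩, ⟨b2, hc2, hd2⟩⟩ := hpair
  have hone : ∀ (B : V →ₗ[F] V) (b : Basis (Fin (d+1)) F V),
      IsCircBidiag (LinearMap.toMatrix b b B) → ∀ μ : F, Module.End.HasEigenvalue B μ →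
      Module.finrank F (Module.End.eigenspace B μ) = 1 := by
    intro B b hc μ hμ
    refine le_antisymm (circ_eigenspace_le_one B b hc μ) ?_
    rw [Nat.one_le_iff_ne_zero]
    intro h0
    exact hμ (Submodule.finrank_eq_zero.mp h0)
  exact ⟨⟨diag_sup_eq_top A b2 hd2, hone A b1 hc1⟩,
    ⟨diag_sup_eq_top Astar b1 hd1, hone Astar b2 hc2⟩⟩
end

section
/- Let A, A* be a circular bidiagonal pair on a (d+1)-dimensional F-vector space V, with standard orderings of primitive idempotents E_0,…,E_d of A and E*_0,…,E*_d of A* (indices mod n = d+1). Then for all 0 ≤ i, j ≤ d: E_i E*_j ≠ 0 and E*_i E_j ≠ 0. -/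
open Polynomial LinearMap
open scoped Fin.NatCast Fin.CommRing

section auxlems
variable {F V : Type*} [Field F] [AddCommGroup V] [Module F V]

lemma pow_mul_proj' (A E : Module.End F V) (t : F) (h : A * E = t • E) (n : ℕ) :
    A ^ n * E = t ^ n • E := by
  induction n with
  | zero => simp
  | succ n ih =>
    rw [pow_succ, pow_succ, mul_assoc, h, mul_smul_comm, ih, smul_smul, mul_comm]

lemma aeval_mul_proj' (A E : Module.End F V) (t : F) (h : A * E = t • E) (p : F[X]) :
    (aeval A p) * E = p.eval t • E := by
  induction p using Polynomial.induction_on' with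
  | add p q hp hq => rw [map_add, add_mul, hp, hq, eval_add, add_smul]
  | monomial n a =>
    rw [aeval_monomial, eval_monomial, mul_assoc, pow_mul_proj' A E t h n,
      Algebra.algebraMap_eq_smul_one, mul_smul_comm, smul_mul_assoc, one_mul, smul_smul,
      mul_comm]

end auxlems

theorem stmt13 {F V : Type*} [Field F] [AddCommGroup V] [Module F V]
    [FiniteDimensional F V] (d : ℕ) (hdim : Module.finrank F V = d + 1)
    (A Astar : Module.End F V) (hpair : IsCBPair d A Astar)
    (θ θs : Fin (d + 1) → F) (hθ : Function.Injective θ) (hθs : Function.Injective θs)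
    (E Estar : Fin (d + 1) → Module.End F V)
    (hidem : ∀ i j : Fin (d + 1), E i * E j = if i = j then E i else 0)
    (hidems : ∀ i j : Fin (d + 1), Estar i * Estar j = if i = j then Estar i else 0)
    (hsum : ∑ i, E i = 1) (hsums : ∑ i, Estar i = 1)
    (hrange : ∀ i : Fin (d + 1), LinearMap.range (E i) = Module.End.eigenspace A (θ i))
    (hranges : ∀ i : Fin (d + 1), LinearMap.range (Estar i) = Module.End.eigenspace Astar (θs i))
    -- the orderings are standard:
    (hstd : ∀ i : Fin (d + 1),
      Submodule.map (Astar - (LinearMap.trace F V (Astar * E i)) • 1)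
        (LinearMap.range (E i)) = LinearMap.range (E (i + 1)))
    (hstds : ∀ i : Fin (d + 1),
      Submodule.map (A - (LinearMap.trace F V (A * Estar i)) • 1)
        (LinearMap.range (Estar i)) = LinearMap.range (Estar (i + 1))) :
    ∀ i j : Fin (d + 1), E i * Estar j ≠ 0 ∧ Estar i * E j ≠ 0 := by
  classical
  have hV : Nontrivial V :=
    Module.nontrivial_of_finrank_pos (R := F) (M := V) (by rw [hdim]; omega)
  set P : Fin (d + 1) → Submodule F V := fun j => LinearMap.range (Estar j) with hP
  have hPj : ∀ k : Fin (d + 1), P k = LinearMap.range (Estar k) := fun _ => rfl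
  set δ : Fin (d + 1) := (d : Fin (d + 1)) with hδ
  -- Estar j acts as identity on P j
  have h1 : ∀ j : Fin (d + 1), ∀ v ∈ P j, Estar j v = v := by
    intro j v hv
    obtain ⟨w, rfl⟩ := hv
    have := congrArg (fun f : Module.End F V => f w) (hidems j j)
    simpa using this
  -- Estar i kills P j for i ≠ j
  have h2 : ∀ i j : Fin (d + 1), i ≠ j → ∀ v ∈ P j, Estar i v = 0 := by
    intro i j hij v hv
    obtain ⟨w, rfl⟩ := hv
    have := congrArg (fun f : Module.End F V => f w) (hidems i j)
    simpa [hij] using this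
  -- every P j is nonzero
  have hbot : ∀ j : Fin (d + 1), P j ≠ ⊥ := by
    intro j0 hj0
    have hall : ∀ m : ℕ, P (j0 + (m : Fin (d + 1))) = ⊥ := by
      intro m
      induction m with
      | zero => simpa using hj0
      | succ m ih =>
        have h := hstds (j0 + (m : Fin (d + 1)))
        rw [← hPj (j0 + (m : Fin (d + 1))), ← hPj (j0 + (m : Fin (d + 1)) + 1)] at h
        rw [ih, Submodule.map_bot] at h
        have hc : ((m + 1 : ℕ) : Fin (d + 1)) = (m : Fin (d + 1)) + 1 := by push_cast; ring
        rw [hc, ← add_assoc]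
        exact h.symm
    have hallk : ∀ k : Fin (d + 1), Estar k = 0 := by
      intro k
      have h := hall ((k - j0).val)
      rw [Fin.cast_val_eq_self] at h
      have hk : j0 + (k - j0) = k := by abel
      rw [hk, hPj] at h
      exact LinearMap.range_eq_bot.mp h
    have h10 : (1 : Module.End F V) = 0 := by
      rw [← hsums]
      exact Finset.sum_eq_zero fun k _ => hallk k
    obtain ⟨v, hv⟩ := exists_ne (0 : V)
    have := congrArg (fun f : Module.End F V => f v) h10
    simp at this
    exact hv this
  -- the chain of polynomials
  have hchain : ∀ m : ℕ, ∀ j : Fin (d + 1), ∃ p : F[X], p.Monic ∧ p.natDegree = m ∧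
      Submodule.map (aeval A p) (P j) = P (j + (m : Fin (d + 1))) := by
    intro m
    induction m with
    | zero =>
      intro j
      refine ⟨1, monic_one, natDegree_one, ?_⟩
      rw [map_one, show ((0 : ℕ) : Fin (d + 1)) = 0 from Nat.cast_zero, add_zero,
        show (1 : Module.End F V) = LinearMap.id from rfl, Submodule.map_id]
    | succ m ih =>
      intro j
      obtain ⟨p, hpm, hpd, hpmap⟩ := ih j
      set c : F := LinearMap.trace F V (A * Estar (j + (m : Fin (d + 1)))) with hc
      refine ⟨(X - C c) * p, (monic_X_sub_C c).mul hpm, ?_, ?_⟩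
      · rw [(monic_X_sub_C c).natDegree_mul hpm, natDegree_X_sub_C, hpd, add_comm]
      · have heq : aeval A ((X - C c) * p) = (A - c • 1) * aeval A p := by
          rw [map_mul, map_sub, aeval_X, aeval_C, Algebra.algebraMap_eq_smul_one]
        have h := hstds (j + (m : Fin (d + 1)))
        rw [← hPj (j + (m : Fin (d + 1))), ← hPj (j + (m : Fin (d + 1)) + 1), ← hc] at h
        rw [heq, Module.End.mul_eq_comp, Submodule.map_comp, hpmap, h]
        congr 1
        push_cast
        rw [add_assoc]
  -- A maps P j into P j ⊔ P (j+1)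
  have hAmap : ∀ j : Fin (d + 1), Submodule.map A (P j) ≤ P j ⊔ P (j + 1) := by
    intro j x hx
    obtain ⟨v, hv, rfl⟩ := hx
    set t : F := LinearMap.trace F V (A * Estar j) with ht
    have hsplit : A v = t • v + (A - t • 1) v := by
      simp only [LinearMap.sub_apply, LinearMap.smul_apply, Module.End.one_apply]
      abel
    rw [hsplit]
    refine Submodule.add_mem_sup (Submodule.smul_mem _ _ hv) ?_
    have h := hstds j
    rw [← hPj j, ← hPj (j + 1), ← ht] at h
    rw [← h]
    exact ⟨v, hv, rfl⟩
  -- powers of A spread P j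
  have hpow : ∀ s : ℕ, ∀ j : Fin (d + 1), Submodule.map (A ^ s) (P j) ≤
      ⨆ ℓ : Fin (s + 1), P (j + ((ℓ.val : ℕ) : Fin (d + 1))) := by
    intro s
    induction s with
    | zero =>
      intro j
      rw [pow_zero, show (1 : Module.End F V) = LinearMap.id from rfl, Submodule.map_id]
      simpa using le_iSup (fun ℓ : Fin 1 => P (j + ((ℓ.val : ℕ) : Fin (d + 1)))) 0
    | succ s ih =>
      intro j
      rw [pow_succ', Module.End.mul_eq_comp, Submodule.map_comp]
      refine le_trans (Submodule.map_mono (ih j)) ?_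
      rw [Submodule.map_iSup]
      refine iSup_le fun ℓ => ?_
      refine le_trans (hAmap _) (sup_le ?_ ?_)
      · have := le_iSup (fun ℓ' : Fin (s + 2) => P (j + ((ℓ'.val : ℕ) : Fin (d + 1))))
          ⟨ℓ.val, by omega⟩
        simpa using this
      · have := le_iSup (fun ℓ' : Fin (s + 2) => P (j + ((ℓ'.val : ℕ) : Fin (d + 1))))
          ⟨ℓ.val + 1, by omega⟩
        have hc : ((ℓ.val + 1 : ℕ) : Fin (d + 1)) = ((ℓ.val : ℕ) : Fin (d + 1)) + 1 := by
          push_cast; ring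
        simpa [hc, add_assoc] using this
  -- vanishing of lower powers
  have hvan : ∀ s : ℕ, s < d → ∀ j : Fin (d + 1), Estar (j + δ) * A ^ s * Estar j = 0 := by
    intro s hs j
    ext v
    simp only [Module.End.mul_apply, LinearMap.zero_apply]
    have hv : Estar j v ∈ P j := ⟨v, rfl⟩
    have hm : (A ^ s) (Estar j v) ∈ ⨆ ℓ : Fin (s + 1), P (j + ((ℓ.val : ℕ) : Fin (d + 1))) :=
      hpow s j ⟨Estar j v, hv, rfl⟩
    have hker : (⨆ ℓ : Fin (s + 1), P (j + ((ℓ.val : ℕ) : Fin (d + 1)))) ≤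
        LinearMap.ker (Estar (j + δ)) := by
      refine iSup_le fun ℓ => ?_
      intro w hw
      have hne : j + δ ≠ j + ((ℓ.val : ℕ) : Fin (d + 1)) := by
        intro h
        have h' : δ = ((ℓ.val : ℕ) : Fin (d + 1)) := add_left_cancel h
        have h1' : δ.val = d := Fin.val_cast_of_lt (by omega)
        have h2' : (((ℓ.val : ℕ) : Fin (d + 1))).val = ℓ.val :=
          Fin.val_cast_of_lt (by omega)
        rw [h'] at h1'
        rw [h2'] at h1'
        omega
      exact LinearMap.mem_ker.mpr (h2 _ _ hne w hw)
    exact LinearMap.mem_ker.mp (hker hm)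
  -- monic degree-d polynomials reduce to A^d
  have hmon : ∀ (j : Fin (d + 1)) (p : F[X]), p.Monic → p.natDegree = d →
      Estar (j + δ) * aeval A p * Estar j = Estar (j + δ) * A ^ d * Estar j := by
    intro j p hpm hpd
    have hsplit : aeval A p = A ^ d + aeval A (p - X ^ d) := by
      rw [map_sub, map_pow, aeval_X]
      abel
    rw [hsplit, mul_add, add_mul]
    have hzero : Estar (j + δ) * aeval A (p - X ^ d) * Estar j = 0 := by
      rcases eq_or_ne (p - X ^ d) 0 with hq | hq
      · rw [hq]; simp
      · have hdeg : (p - X ^ d).natDegree < d := by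
          have h1' : p.degree = (X ^ d : F[X]).degree := by
            rw [degree_X_pow, degree_eq_natDegree hpm.ne_zero, hpd]
          have h2' : (p - X ^ d).degree < p.degree :=
            degree_sub_lt h1' hpm.ne_zero (by rw [hpm.leadingCoeff, leadingCoeff_X_pow])
          rw [degree_eq_natDegree hpm.ne_zero, hpd] at h2'
          exact (natDegree_lt_iff_degree_lt hq).mpr h2'
        rw [aeval_eq_sum_range' hdeg A]
        rw [Finset.mul_sum, Finset.sum_mul]
        refine Finset.sum_eq_zero fun s hs => ?_
        rw [Finset.mem_range] at hs
        rw [mul_smul_comm, smul_mul_assoc, hvan s hs j, smul_zero]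
    rw [hzero, add_zero]
  -- the key nonvanishing
  have hkey : ∀ j : Fin (d + 1), Estar (j + δ) * A ^ d * Estar j ≠ 0 := by
    intro j
    obtain ⟨p, hpm, hpd, hpmap⟩ := hchain d j
    rw [← hmon j p hpm hpd]
    have hne : Submodule.map (aeval A p) (P j) ≠ ⊥ := by rw [hpmap]; exact hbot _
    obtain ⟨x, hx, hx0⟩ := Submodule.exists_mem_ne_zero_of_ne_bot hne
    obtain ⟨v, hv, rfl⟩ := hx
    have hxmem : (aeval A p) v ∈ P (j + δ) := by
      rw [← hpmap]; exact ⟨v, hv, rfl⟩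
    intro hcon
    have := congrArg (fun f : Module.End F V => f v) hcon
    simp only [Module.End.mul_apply, LinearMap.zero_apply] at this
    rw [h1 j v hv, h1 (j + δ) _ hxmem] at this
    exact hx0 this
  -- A acts as θ k on range E k
  have hEk : ∀ k : Fin (d + 1), A * E k = θ k • E k := by
    intro k
    ext v
    simp only [Module.End.mul_apply, LinearMap.smul_apply]
    have hm : E k v ∈ Module.End.eigenspace A (θ k) := by
      rw [← hrange k]; exact ⟨v, rfl⟩
    exact Module.End.mem_eigenspace_iff.mp hm
  -- E i as a polynomial in A
  have hEi : ∀ i : Fin (d + 1),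
      aeval A (∏ ℓ ∈ Finset.univ.erase i, (X - C (θ ℓ))) =
        (∏ ℓ ∈ Finset.univ.erase i, (θ i - θ ℓ)) • E i := by
    intro i
    set Pi : F[X] := ∏ ℓ ∈ Finset.univ.erase i, (X - C (θ ℓ)) with hPi
    have hev : ∀ k : Fin (d + 1), Pi.eval (θ k) = ∏ ℓ ∈ Finset.univ.erase i, (θ k - θ ℓ) := by
      intro k
      rw [hPi, eval_prod]
      exact Finset.prod_congr rfl fun ℓ _ => by rw [eval_sub, eval_X, eval_C]
    calc aeval A Pi = aeval A Pi * ∑ k, E k := by rw [hsum, mul_one]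
      _ = ∑ k, aeval A Pi * E k := by rw [Finset.mul_sum]
      _ = ∑ k, Pi.eval (θ k) • E k :=
          Finset.sum_congr rfl fun k _ => aeval_mul_proj' A (E k) (θ k) (hEk k) Pi
      _ = Pi.eval (θ i) • E i := by
          refine Finset.sum_eq_single i (fun k _ hk => ?_) (fun h => absurd (Finset.mem_univ i) h)
          have hz : Pi.eval (θ k) = 0 := by
            rw [hev]
            exact Finset.prod_eq_zero (Finset.mem_erase.mpr ⟨hk, Finset.mem_univ k⟩) (sub_self _)
          rw [hz, zero_smul]
      _ = (∏ ℓ ∈ Finset.univ.erase i, (θ i - θ ℓ)) • E i := by rw [hev]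
  -- the full triple product is nonzero
  have htriple : ∀ i j : Fin (d + 1), Estar (j + δ) * (E i * Estar j) ≠ 0 := by
    intro i j
    set c : F := ∏ ℓ ∈ Finset.univ.erase i, (θ i - θ ℓ) with hcc
    have hc0 : c ≠ 0 := by
      rw [hcc]
      refine Finset.prod_ne_zero_iff.mpr fun ℓ hℓ => sub_ne_zero.mpr fun h => ?_
      exact (Finset.mem_erase.mp hℓ).1 (hθ h).symm
    have hEieq : E i = c⁻¹ • aeval A (∏ ℓ ∈ Finset.univ.erase i, (X - C (θ ℓ))) := by
      rw [hEi i, ← hcc, smul_smul, inv_mul_cancel₀ hc0, one_smul]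
    have hPim : (∏ ℓ ∈ Finset.univ.erase i, (X - C (θ ℓ))).Monic :=
      monic_prod_of_monic _ _ fun ℓ _ => monic_X_sub_C _
    have hPid : (∏ ℓ ∈ Finset.univ.erase i, (X - C (θ ℓ))).natDegree = d := by
      rw [natDegree_prod _ _ fun ℓ _ => X_sub_C_ne_zero (θ ℓ)]
      simp [natDegree_X_sub_C, Finset.card_erase_of_mem (Finset.mem_univ i)]
    have heq : Estar (j + δ) * (E i * Estar j) =
        c⁻¹ • (Estar (j + δ) * A ^ d * Estar j) := by
      rw [hEieq, smul_mul_assoc, mul_smul_comm, ← mul_assoc, hmon j _ hPim hPid]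
    rw [heq]
    exact smul_ne_zero (inv_ne_zero hc0) (hkey j)
  -- conclude
  intro i j
  constructor
  · intro h0
    exact htriple i j (by rw [h0, mul_zero])
  · intro h0
    have key := htriple j (i + 1)
    have hδ0 : (i + 1) + δ = i := by
      have h := (Fin.natCast_self (d + 1) : ((d + 1 : ℕ) : Fin (d + 1)) = 0)
      push_cast at h
      show i + 1 + (d : Fin (d + 1)) = i
      rw [add_assoc, add_comm (1 : Fin (d + 1)) (d : Fin (d + 1)), h, add_zero]
    rw [hδ0] at key
    exact key (by rw [← mul_assoc, h0, zero_mul])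
end

section
/- Let A, A* be a circular bidiagonal pair on a (d+1)-dimensional F-vector space V, with standard orderings of primitive idempotents such that E_iE*_j ≠ 0 for all i,j. Then the (d+1)² maps E_i E*_j (0 ≤ i,j ≤ d) form a basis of End(V); equivalently, the maps A^i (A*)^j (0 ≤ i,j ≤ d) form a basis of End(V). -/
theorem stmt14 {F V : Type*} [Field F] [AddCommGroup V] [Module F V]
    [FiniteDimensional F V] (d : ℕ) (hdim : Module.finrank F V = d + 1)
    (A Astar : Module.End F V)
    (θ θs : Fin (d + 1) → F) (hθ : Function.Injective θ) (hθs : Function.Injective θs)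
    (E Estar : Fin (d + 1) → Module.End F V)
    (hidem : ∀ i j : Fin (d + 1), E i * E j = if i = j then E i else 0)
    (hidems : ∀ i j : Fin (d + 1), Estar i * Estar j = if i = j then Estar i else 0)
    (hsum : ∑ i, E i = 1) (hsums : ∑ i, Estar i = 1)
    (hrange : ∀ i : Fin (d + 1), LinearMap.range (E i) = Module.End.eigenspace A (θ i))
    (hranges : ∀ i : Fin (d + 1), LinearMap.range (Estar i) = Module.End.eigenspace Astar (θs i))
    (hnz : ∀ i j : Fin (d + 1), E i * Estar j ≠ 0) :
    (∃ b : Module.Basis (Fin (d + 1) × Fin (d + 1)) F (Module.End F V),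
      ∀ p : Fin (d + 1) × Fin (d + 1), b p = E p.1 * Estar p.2) ∧
    (∃ b : Module.Basis (Fin (d + 1) × Fin (d + 1)) F (Module.End F V),
      ∀ p : Fin (d + 1) × Fin (d + 1), b p = A ^ (p.1 : ℕ) * Astar ^ (p.2 : ℕ)) := by
  classical
  -- spectral decomposition of A
  have hAE : ∀ i, A * E i = θ i • E i := by
    intro i
    ext v
    have hv : E i v ∈ Module.End.eigenspace A (θ i) := by
      rw [← hrange i]; exact ⟨v, rfl⟩
    simpa [Module.End.mem_eigenspace_iff] using hv
  have hAsE : ∀ i, Astar * Estar i = θs i • Estar i := by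
    intro i
    ext v
    have hv : Estar i v ∈ Module.End.eigenspace Astar (θs i) := by
      rw [← hranges i]; exact ⟨v, rfl⟩
    simpa [Module.End.mem_eigenspace_iff] using hv
  have hApow : ∀ n : ℕ, A ^ n = ∑ i, θ i ^ n • E i := by
    intro n
    induction n with
    | zero => simpa using hsum.symm
    | succ n ih =>
      rw [pow_succ', ih, Finset.mul_sum]
      refine Finset.sum_congr rfl fun i _ => ?_
      rw [mul_smul_comm, hAE i, smul_smul]; congr 1; ring
  have hAspow : ∀ n : ℕ, Astar ^ n = ∑ i, θs i ^ n • Estar i := by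
    intro n
    induction n with
    | zero => simpa using hsums.symm
    | succ n ih =>
      rw [pow_succ', ih, Finset.mul_sum]
      refine Finset.sum_congr rfl fun i _ => ?_
      rw [mul_smul_comm, hAsE i, smul_smul]; congr 1; ring
  -- the key product computation
  have hprod : ∀ k i j l : Fin (d + 1),
      E k * (E i * Estar j) * Estar l
        = if i = k ∧ j = l then E k * Estar l else 0 := by
    intro k i j l
    rw [← mul_assoc, mul_assoc (E k * E i), hidem, hidems]
    by_cases h1 : k = i <;> by_cases h2 : j = l <;>
      simp [h1, h2, eq_comm, mul_assoc]
  have hcard : Fintype.card (Fin (d + 1) × Fin (d + 1))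
      = Module.finrank F (Module.End F V) := by
    rw [Module.finrank_linearMap, hdim]
    simp
  -- linear independence of the E_i Estar_j
  have hlin : LinearIndependent F (fun p : Fin (d + 1) × Fin (d + 1) =>
      E p.1 * Estar p.2) := by
    rw [Fintype.linearIndependent_iff]
    intro c hc p
    obtain ⟨k, l⟩ := p
    have h3 : E k * (∑ p : Fin (d + 1) × Fin (d + 1),
        c p • (E p.1 * Estar p.2)) * Estar l = c (k, l) • (E k * Estar l) := by
      rw [Finset.mul_sum, Finset.sum_mul]
      have : ∀ p : Fin (d + 1) × Fin (d + 1),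
          E k * (c p • (E p.1 * Estar p.2)) * Estar l
            = if p = (k, l) then c p • (E k * Estar l) else 0 := by
        intro ⟨i, j⟩
        rw [mul_smul_comm, smul_mul_assoc, hprod]
        simp only [Prod.mk.injEq]
        by_cases h : i = k ∧ j = l <;> simp [h]
      rw [Finset.sum_congr rfl fun p _ => this p, Finset.sum_ite_eq' _ (k, l)]
      simp
    rw [hc] at h3
    simp only [mul_zero, zero_mul] at h3
    rcases smul_eq_zero.mp h3.symm with h | h
    · exact h
    · exact absurd h (hnz k l)
  refine ⟨⟨basisOfLinearIndependentOfCardEqFinrank hlin hcard,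
    fun p => congrFun (coe_basisOfLinearIndependentOfCardEqFinrank hlin hcard) p⟩, ?_⟩
  -- expansion of A^i Astar^j
  have hexp : ∀ p : Fin (d + 1) × Fin (d + 1),
      A ^ (p.1 : ℕ) * Astar ^ (p.2 : ℕ)
        = ∑ q : Fin (d + 1) × Fin (d + 1),
            (θ q.1 ^ (p.1 : ℕ) * θs q.2 ^ (p.2 : ℕ)) • (E q.1 * Estar q.2) := by
    intro ⟨i, j⟩
    rw [hApow, hAspow, Finset.sum_mul_sum, Fintype.sum_prod_type]
    refine Finset.sum_congr rfl fun k _ => Finset.sum_congr rfl fun l _ => ?_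
    rw [smul_mul_assoc, mul_smul_comm, smul_smul]
  have hlin2 : LinearIndependent F (fun p : Fin (d + 1) × Fin (d + 1) =>
      A ^ (p.1 : ℕ) * Astar ^ (p.2 : ℕ)) := by
    rw [Fintype.linearIndependent_iff]
    intro c hc
    have hc2 : ∑ q : Fin (d + 1) × Fin (d + 1),
        (∑ p : Fin (d + 1) × Fin (d + 1),
          c p * (θ q.1 ^ (p.1 : ℕ) * θs q.2 ^ (p.2 : ℕ))) • (E q.1 * Estar q.2) = 0 := by
      rw [← hc]
      calc ∑ q : Fin (d + 1) × Fin (d + 1),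
            (∑ p : Fin (d + 1) × Fin (d + 1),
              c p * (θ q.1 ^ (p.1 : ℕ) * θs q.2 ^ (p.2 : ℕ))) • (E q.1 * Estar q.2)
          = ∑ q : Fin (d + 1) × Fin (d + 1), ∑ p : Fin (d + 1) × Fin (d + 1),
              (c p * (θ q.1 ^ (p.1 : ℕ) * θs q.2 ^ (p.2 : ℕ))) • (E q.1 * Estar q.2) := by
            simp [Finset.sum_smul]
        _ = ∑ p : Fin (d + 1) × Fin (d + 1), ∑ q : Fin (d + 1) × Fin (d + 1),
              (c p * (θ q.1 ^ (p.1 : ℕ) * θs q.2 ^ (p.2 : ℕ))) • (E q.1 * Estar q.2) :=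
            Finset.sum_comm
        _ = ∑ p : Fin (d + 1) × Fin (d + 1), c p • (A ^ (p.1 : ℕ) * Astar ^ (p.2 : ℕ)) := by
            refine Finset.sum_congr rfl fun p _ => ?_
            rw [hexp p, Finset.smul_sum]
            exact Finset.sum_congr rfl fun q _ => mul_smul _ _ _
    have hcoef : ∀ q : Fin (d + 1) × Fin (d + 1),
        ∑ p : Fin (d + 1) × Fin (d + 1),
          c p * (θ q.1 ^ (p.1 : ℕ) * θs q.2 ^ (p.2 : ℕ)) = 0 := by
      intro q
      exact Fintype.linearIndependent_iff.mp hlin _ hc2 q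
    -- matrix argument
    set M := Matrix.vandermonde θ with hM
    set N := Matrix.vandermonde θs with hN
    set C : Matrix (Fin (d + 1)) (Fin (d + 1)) F :=
      Matrix.of (fun i j => c (i, j)) with hC
    have hMCN : M * C * N.transpose = 0 := by
      ext k l
      have := hcoef (k, l)
      rw [Fintype.sum_prod_type] at this
      simp only [Matrix.mul_apply, Matrix.zero_apply, Matrix.transpose_apply,
        Matrix.vandermonde, Matrix.of_apply, hC, hM, hN]
      rw [← this]
      rw [Finset.sum_comm]
      refine Finset.sum_congr rfl fun j _ => ?_
      rw [Finset.sum_mul]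
      refine Finset.sum_congr rfl fun i _ => ?_
      ring
    have hMdet : IsUnit M.det :=
      isUnit_iff_ne_zero.mpr (Matrix.det_vandermonde_ne_zero_iff.mpr hθ)
    have hNdet : IsUnit N.transpose.det := by
      rw [Matrix.det_transpose]
      exact isUnit_iff_ne_zero.mpr (Matrix.det_vandermonde_ne_zero_iff.mpr hθs)
    have hC0 : C = 0 := by
      have : M⁻¹ * (M * C * N.transpose) * N.transpose⁻¹ = C := by
        rw [mul_assoc M C, Matrix.nonsing_inv_mul_cancel_left _ _ hMdet,
          Matrix.mul_nonsing_inv_cancel_right _ _ hNdet]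
      rw [hMCN] at this
      simpa using this.symm
    intro p
    have := congrFun (congrFun hC0 p.1) p.2
    simpa [hC] using this
  refine ⟨basisOfLinearIndependentOfCardEqFinrank hlin2 hcard, fun p => ?_⟩
  rw [show ((basisOfLinearIndependentOfCardEqFinrank hlin2 hcard) : _ → Module.End F V) = _ from
    coe_basisOfLinearIndependentOfCardEqFinrank hlin2 hcard]
end

section
/- Let A, A* be a circular bidiagonal pair on a (d+1)-dimensional F-vector space V. Then there exists a unique 4-tuple (q, α, β, γ) of scalars in F such that qAA* − A*A + αA − βA* = γI. -/
section aux
variable {F : Type*} [Field F] {d : ℕ}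

lemma fin_one_ne_zero (hd : 1 ≤ d) : (1 : Fin (d + 1)) ≠ 0 := by
  intro h
  have := congrArg Fin.val h
  simp [Fin.val_one', Nat.mod_eq_of_lt (by omega : 1 < d + 1)] at this

lemma fin_succ_ne (hd : 1 ≤ d) (k : Fin (d + 1)) : k + 1 ≠ k := by
  intro h
  have : (1 : Fin (d+1)) = 0 := by
    have := congrArg (· - k) h
    simpa [add_comm, add_sub_cancel_right] using this
  exact fin_one_ne_zero hd this

lemma fin_val_add_one_le (x : Fin (d + 1)) : (x + 1).val ≤ x.val + 1 := by
  rw [Fin.val_add_one]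
  split <;> omega

variable {M : Matrix (Fin (d + 1)) (Fin (d + 1)) F}

lemma cb_succ (hM : IsCircBidiag M) (k : Fin (d + 1)) : M (k + 1) k ≠ 0 := by
  by_cases h : k = Fin.last d
  · subst h
    rw [Fin.last_add_one]
    exact hM.2.2
  · have hk : k.val < d := by
      have := k.is_lt
      have : k.val ≠ d := fun hc => h (Fin.ext hc)
      omega
    have hval : (k + 1).val = k.val + 1 := by
      rw [Fin.val_add_one_of_lt]
      exact Fin.lt_last_iff_ne_last.mpr h
    exact hM.2.1 _ _ hval

lemma cb_shape (hM : IsCircBidiag M) {j k : Fin (d + 1)} (h : M j k ≠ 0) :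
    j = k ∨ j = k + 1 := by
  rcases hM.1 _ _ h with h1 | h2 | ⟨h3, h4⟩
  · exact Or.inl h1
  · right
    have hk : k.val < d := by have := j.is_lt; omega
    apply Fin.ext
    rw [Fin.val_add_one_of_lt (by simp [Fin.lt_iff_val_lt_val, Fin.val_last]; omega)]
    exact h2
  · right
    have hk : k = Fin.last d := Fin.ext (by simp [Fin.val_last, h4])
    have hj : j = 0 := Fin.ext (by simp [h3])
    rw [hk, hj, Fin.last_add_one]

end aux

section pow
variable {F : Type*} [Field F] {d : ℕ} {M : Matrix (Fin (d + 1)) (Fin (d + 1)) F}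

lemma cb_pow_le (hM : IsCircBidiag M) :
    ∀ (s : ℕ) (i j : Fin (d + 1)), (M ^ s) j i ≠ 0 → (j - i).val ≤ s := by
  intro s
  induction s with
  | zero =>
    intro i j h
    rw [pow_zero] at h
    by_cases hji : j = i
    · subst hji; simp
    · exact absurd (Matrix.one_apply_ne hji) h
  | succ s ih =>
    intro i j h
    rw [pow_succ', Matrix.mul_apply] at h
    obtain ⟨m, -, hm⟩ := Finset.exists_ne_zero_of_sum_ne_zero h
    have h1 : M j m ≠ 0 := fun hc => hm (by rw [hc, zero_mul])
    have h2 : (M ^ s) m i ≠ 0 := fun hc => hm (by rw [hc, mul_zero])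
    have hmi := ih i m h2
    rcases cb_shape hM h1 with rfl | rfl
    · omega
    · have : (m + 1 - i) = (m - i) + 1 := by abel
      rw [this]
      have := fin_val_add_one_le (m - i)
      omega

lemma cb_pow_ne (hd : 1 ≤ d) (hM : IsCircBidiag M) :
    ∀ (s : ℕ), s ≤ d → ∀ (i j : Fin (d + 1)), (j - i).val = s → (M ^ s) j i ≠ 0 := by
  intro s
  induction s with
  | zero =>
    intro _ i j hji
    have : j - i = 0 := by
      apply Fin.ext; simpa using hji
    have hji' : j = i := by
      have := sub_eq_zero.mp this; exact this
    subst hji'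
    rw [pow_zero, Matrix.one_apply_eq]
    exact one_ne_zero
  | succ s ih =>
    intro hs i j hji
    set m := j - 1 with hm
    have hmj : m + 1 = j := sub_add_cancel j 1
    have hxne : j - i ≠ 0 := by
      intro hc
      rw [hc] at hji; simp at hji
    have hmi : (m - i).val = s := by
      have h1 : (m - i) + 1 = j - i := by rw [hm]; abel
      have h2 := Fin.val_add_one (m - i)
      rw [h1] at h2
      split at h2
      · rw [h2] at hji; omega
      · omega
    have hsum : (M ^ (s+1)) j i = M j j * (M ^ s) j i + M j m * (M ^ s) m i := by
      rw [pow_succ', Matrix.mul_apply]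
      rw [← Finset.sum_subset (Finset.subset_univ {j, m})]
      · rw [Finset.sum_pair]
        intro hc
        rw [← hmj] at hc
        exact fin_succ_ne hd m hc
      · intro x _ hx
        simp only [Finset.mem_insert, Finset.mem_singleton] at hx
        push_neg at hx
        by_cases hMx : M j x = 0
        · rw [hMx, zero_mul]
        · rcases cb_shape hM hMx with rfl | rfl
          · exact absurd rfl hx.1
          · exfalso
            apply hx.2
            rw [hm, add_sub_cancel_right]
    rw [hsum]
    have hz : (M ^ s) j i = 0 := by
      by_contra hc
      have := cb_pow_le hM s i j hc
      omega
    rw [hz, mul_zero, zero_add]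
    apply mul_ne_zero
    · rw [← hmj]; exact cb_succ hM m
    · exact ih (by omega) i m hmi

end pow

section core
open Polynomial
variable {F : Type*} [Field F] {d : ℕ} {B : Matrix (Fin (d + 1)) (Fin (d + 1)) F}

lemma aeval_entry (hB : IsCircBidiag B) {p : Polynomial F} {k : ℕ} (hpk : p.natDegree ≤ k)
    (i j : Fin (d + 1)) (hji : (j - i).val = k) :
    (aeval B p) j i = p.coeff k * (B ^ k) j i := by
  rw [aeval_eq_sum_range' (show p.natDegree < k + 1 by omega)]
  have : (∑ s ∈ Finset.range (k+1), p.coeff s • B ^ s) j i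
      = ∑ s ∈ Finset.range (k+1), p.coeff s * (B ^ s) j i := by
    rw [Matrix.sum_apply]
    apply Finset.sum_congr rfl
    intro s _
    simp [Matrix.smul_apply]
  rw [this]
  rw [Finset.sum_eq_single k]
  · intro s hs hsk
    have hs' : s < k := by simp at hs; omega
    have : (B ^ s) j i = 0 := by
      by_contra hc
      have := cb_pow_le hB s i j hc
      omega
    rw [this, mul_zero]
  · intro h; simp at h

lemma key_deg (hd : 1 ≤ d) (hB : IsCircBidiag B) {θ : Fin (d + 1) → F}
    (hθ : ∃ i j, θ i ≠ θ j) {p r : Polynomial F}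
    (hp : p.natDegree ≤ d) (hr : r.natDegree ≤ d)
    (h : B * Matrix.diagonal θ = Matrix.diagonal θ * (aeval B p) + aeval B r) :
    p.natDegree ≤ 1 ∧ r.natDegree ≤ 1 := by
  set k := max p.natDegree r.natDegree with hk
  suffices hk1 : k ≤ 1 by
    constructor <;> omega
  by_contra hk2
  push_neg at hk2
  have hk2' : 2 ≤ k := hk2
  have hkd : k ≤ d := by omega
  -- main claim
  have claim : ∀ j : Fin (d + 1), θ j * p.coeff k + r.coeff k = 0 := by
    intro j
    obtain ⟨i, hji⟩ : ∃ i : Fin (d + 1), (j - i).val = k :=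
      ⟨j - ⟨k, by omega⟩, by rw [sub_sub_cancel]⟩
    have hBji : B j i = 0 := by
      by_contra hc
      rcases cb_shape hB hc with rfl | rfl
      · simp at hji; omega
      · have : (i + 1 - i) = 1 := by abel
        rw [this] at hji
        rw [Fin.val_one', Nat.mod_eq_of_lt (by omega)] at hji
        omega
    have hent := congrFun (congrFun h j) i
    rw [Matrix.add_apply, Matrix.mul_diagonal, Matrix.diagonal_mul, hBji, zero_mul] at hent
    rw [aeval_entry hB (le_max_left _ _) i j hji, aeval_entry hB (le_max_right _ _) i j hji]
      at hent
    have hpow := cb_pow_ne hd hB k hkd i j hji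
    have h0 : (θ j * p.coeff k + r.coeff k) * (B ^ k) j i = 0 := by
      linear_combination -hent
    rcases mul_eq_zero.mp h0 with h' | h'
    · exact h'
    · exact absurd h' hpow
  obtain ⟨i0, j0, hij⟩ := hθ
  have hpk : p.coeff k = 0 := by
    have h1 := claim i0
    have h2 := claim j0
    have h0 : (θ i0 - θ j0) * p.coeff k = 0 := by linear_combination h1 - h2
    rcases mul_eq_zero.mp h0 with h' | h'
    · exact absurd (sub_eq_zero.mp h') hij
    · exact h'
  have hrk : r.coeff k = 0 := by
    have h1 := claim i0
    rw [hpk, mul_zero, zero_add] at h1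
    exact h1
  rcases max_choice p.natDegree r.natDegree with hc | hc <;>
    rw [hk, hc] at hpk hrk hk2'
  · have hpne : p ≠ 0 := by
      intro h0
      rw [h0] at hk2'
      simp at hk2'
    exact (mt leadingCoeff_eq_zero.mp hpne) hpk
  · have hrne : r ≠ 0 := by
      intro h0
      rw [h0] at hk2'
      simp at hk2'
    exact (mt leadingCoeff_eq_zero.mp hrne) hrk
end core

section descend
variable {F : Type*} [Field F] {d : ℕ} {B : Matrix (Fin (d + 1)) (Fin (d + 1)) F}

lemma cb_row (hd : 1 ≤ d) (hB : IsCircBidiag B) {t : F} {u : Fin (d + 1) → F}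
    (hu : B.mulVec u = t • u) (k : Fin (d + 1)) :
    B (k + 1) k * u k = (t - B (k + 1) (k + 1)) * u (k + 1) := by
  have hrow := congrFun hu (k + 1)
  rw [Matrix.mulVec, dotProduct] at hrow
  have hsum : ∑ m, B (k + 1) m * u m
      = B (k + 1) (k + 1) * u (k + 1) + B (k + 1) k * u k := by
    rw [← Finset.sum_subset (Finset.subset_univ {k + 1, k})]
    · rw [Finset.sum_pair (fin_succ_ne hd k)]
    · intro x _ hx
      simp only [Finset.mem_insert, Finset.mem_singleton] at hx
      push_neg at hx
      by_cases hBx : B (k + 1) x = 0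
      · rw [hBx, zero_mul]
      · rcases cb_shape hB hBx with h' | h'
        · exact absurd h'.symm hx.1
        · exact absurd (add_right_cancel h') (by exact fun hc => hx.2 hc.symm)
  rw [hsum] at hrow
  simp only [Pi.smul_apply, smul_eq_mul] at hrow
  linear_combination hrow

lemma descend (hd : 1 ≤ d) (hB : IsCircBidiag B) {t : F} {u : Fin (d + 1) → F}
    (hu : B.mulVec u = t • u) (h0 : u (Fin.last d) = 0) : u = 0 := by
  have hstep : ∀ k : Fin (d + 1), u (k + 1) = 0 → u k = 0 := by
    intro k hk1
    have := cb_row hd hB hu k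
    rw [hk1, mul_zero] at this
    exact (mul_eq_zero.mp this).resolve_left (cb_succ hB k)
  have main : ∀ n : ℕ, (hn : n ≤ d) → u ⟨d - n, by omega⟩ = 0 := by
    intro n
    induction n with
    | zero =>
      intro _
      have : (⟨d - 0, by omega⟩ : Fin (d + 1)) = Fin.last d := by
        apply Fin.ext; simp [Fin.val_last]
      rw [this]; exact h0
    | succ n ih =>
      intro hn
      apply hstep
      have heq : (⟨d - (n + 1), by omega⟩ : Fin (d + 1)) + 1 = ⟨d - n, by omega⟩ := by
        apply Fin.ext
        rw [Fin.val_add_one_of_lt (by simp [Fin.lt_iff_val_lt_val, Fin.val_last]; omega)]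
        simp; omega
      rw [heq]
      exact ih (by omega)
  funext m
  have : u ⟨d - (d - m.val), by omega⟩ = 0 := main (d - m.val) (by omega)
  have hm : (⟨d - (d - m.val), by omega⟩ : Fin (d + 1)) = m := by
    apply Fin.ext; simp; omega
  rw [hm] at this
  exact this

end descend

section distinct
variable {F V : Type*} [Field F] [AddCommGroup V] [Module F V] {d : ℕ}

lemma eig_unique (hd : 1 ≤ d) (Astar : Module.End F V) (b' : Module.Basis (Fin (d + 1)) F V)
    (hBs : IsCircBidiag (LinearMap.toMatrix b' b' Astar)) {t : F} {v₁ v₂ : V}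
    (h1 : Astar v₁ = t • v₁) (h2 : Astar v₂ = t • v₂)
    (hli : ∀ c₁ c₂ : F, c₁ • v₁ + c₂ • v₂ = 0 → c₁ = 0 ∧ c₂ = 0) : False := by
  set Bs := LinearMap.toMatrix b' b' Astar with hBsdef
  have hmv : ∀ v : V, Astar v = t • v → Bs.mulVec ⇑(b'.repr v) = t • ⇑(b'.repr v) := by
    intro v hv
    rw [hBsdef, LinearMap.toMatrix_mulVec_repr, hv, map_smul]
    rfl
  have hu := hmv v₁ h1
  have hw := hmv v₂ h2
  set u : Fin (d + 1) → F := ⇑(b'.repr v₁) with hudef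
  set w : Fin (d + 1) → F := ⇑(b'.repr v₂) with hwdef
  set c₁ := w (Fin.last d) with hc1
  set c₂ := -(u (Fin.last d)) with hc2
  have hvv : Bs.mulVec (c₁ • u + c₂ • w) = t • (c₁ • u + c₂ • w) := by
    rw [Matrix.mulVec_add, Matrix.mulVec_smul, Matrix.mulVec_smul, hu, hw]
    rw [smul_add]
    rw [smul_comm c₁ t, smul_comm c₂ t]
  have hlast : (c₁ • u + c₂ • w) (Fin.last d) = 0 := by
    simp [hc1, hc2]
    ring
  have hzero := descend hd hBs hvv hlast
  have hxrepr : b'.repr (c₁ • v₁ + c₂ • v₂) = 0 := by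
    ext a
    have := congrFun hzero a
    simpa [hudef, hwdef] using this
  have hx : c₁ • v₁ + c₂ • v₂ = 0 := by
    have := b'.repr.map_eq_zero_iff.mp hxrepr
    exact this
  obtain ⟨hc10, hc20⟩ := hli _ _ hx
  have hul : u (Fin.last d) = 0 := by
    exact neg_eq_zero.mp hc20
  have hu0 : u = 0 := descend hd hBs hu hul
  have hv10 : v₁ = 0 := by
    apply b'.repr.map_eq_zero_iff.mp
    ext a
    exact congrFun hu0 a
  have := hli 1 0 (by rw [hv10]; simp)
  exact one_ne_zero this.1

end distinct

section glue
open Polynomial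
variable {F : Type*} [Field F] {d : ℕ}

lemma isDiag_eq_diagonal {M : Matrix (Fin (d + 1)) (Fin (d + 1)) F} (hM : M.IsDiag) :
    M = Matrix.diagonal (fun i => M i i) := by
  ext i j
  by_cases h : i = j
  · subst h; simp
  · rw [Matrix.diagonal_apply_ne _ h]
    exact hM h

lemma aeval_diagonal (θ : Fin (d + 1) → F) (p : Polynomial F) :
    aeval (Matrix.diagonal θ) p = Matrix.diagonal (fun i => p.eval (θ i)) := by
  have h1 : Matrix.diagonal θ = Matrix.diagonalAlgHom F θ := rfl
  have h2 : (aeval θ p : Fin (d + 1) → F) = fun i => p.eval (θ i) := by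
    funext i
    have := aeval_algHom_apply (Pi.evalAlgHom F (fun _ : Fin (d+1) => F) i) θ p
    simp only [Pi.evalAlgHom_apply] at this
    rw [← this]
    simp [Polynomial.coe_aeval_eq_eval]
  rw [h1, aeval_algHom_apply, h2]
  rfl

lemma base_identity {Mb : Matrix (Fin (d + 1)) (Fin (d + 1)) F} (hM : IsCircBidiag Mb)
    (θ : Fin (d + 1) → F) :
    Matrix.diagonal θ * Mb =
      Mb * Matrix.diagonal (fun i => θ (i + 1)) +
        Matrix.diagonal (fun i => Mb i i * (θ i - θ (i + 1))) := by
  ext j i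
  rw [Matrix.add_apply, Matrix.diagonal_mul, Matrix.mul_diagonal]
  by_cases h : j = i
  · subst h
    rw [Matrix.diagonal_apply_eq]
    ring
  · rw [Matrix.diagonal_apply_ne _ h, add_zero]
    by_cases hMb : Mb j i = 0
    · rw [hMb, mul_zero, zero_mul]
    · rcases cb_shape hM hMb with h' | h'
      · exact absurd h' h
      · subst h'
        rw [mul_comm]

end glue

section main
open Polynomial
variable {F V : Type*} [Field F] [AddCommGroup V] [Module F V] {d : ℕ}

lemma apply_basis_of_diagonal (f : Module.End F V) (b : Module.Basis (Fin (d + 1)) F V)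
    {θ : Fin (d + 1) → F} (h : LinearMap.toMatrix b b f = Matrix.diagonal θ) (i : Fin (d + 1)) :
    f (b i) = θ i • b i := by
  have hf := Matrix.toLin_toMatrix b b f
  rw [← hf, h, Matrix.toLin_self]
  rw [Finset.sum_eq_single i]
  · rw [Matrix.diagonal_apply_eq]
  · intro j _ hj
    rw [Matrix.diagonal_apply_ne _ hj, zero_smul]
  · intro hi; exact absurd (Finset.mem_univ i) hi

lemma theta_inj (hd : 1 ≤ d) (Astar : Module.End F V) (b b' : Module.Basis (Fin (d + 1)) F V)
    {θ : Fin (d + 1) → F} (hAsb : LinearMap.toMatrix b b Astar = Matrix.diagonal θ)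
    (hBs : IsCircBidiag (LinearMap.toMatrix b' b' Astar)) :
    Function.Injective θ := by
  intro i j hij
  by_contra hne
  apply eig_unique hd Astar b' hBs (v₁ := b i) (v₂ := b j)
    (apply_basis_of_diagonal Astar b hAsb i)
    (by rw [apply_basis_of_diagonal Astar b hAsb j, hij])
  intro c₁ c₂ heq
  have h1 := congrArg (fun x => b.repr x i) heq
  have h2 := congrArg (fun x => b.repr x j) heq
  simp only [map_add, map_smul, Finsupp.coe_add, Finsupp.coe_smul, Pi.add_apply,
    Pi.smul_apply, Module.Basis.repr_self_apply, map_zero, Finsupp.coe_zero, Pi.zero_apply,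
    smul_eq_mul] at h1 h2
  rw [if_neg (fun hc : j = i => hne hc.symm)] at h1
  rw [if_neg hne] at h2
  simp at h1 h2
  exact ⟨h1, h2⟩

lemma indep (hd : 1 ≤ d) {A Astar : Module.End F V} (b : Module.Basis (Fin (d + 1)) F V)
    (hAb : IsCircBidiag (LinearMap.toMatrix b b A)) {θ : Fin (d + 1) → F}
    (hAsb : LinearMap.toMatrix b b Astar = Matrix.diagonal θ) (hθ : θ 0 ≠ θ 1)
    {x y z w : F} (h : x • (A * Astar) + y • A + z • Astar + w • 1 = 0) :
    x = 0 ∧ y = 0 ∧ z = 0 ∧ w = 0 := by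
  set Mb := LinearMap.toMatrix b b A with hMb
  have hm := congrArg (LinearMap.toMatrix b b) h
  rw [map_add, map_add, map_add, map_smul, map_smul, map_smul, map_smul, map_zero,
    LinearMap.toMatrix_mul, hAsb, LinearMap.toMatrix_one, ← hMb] at hm
  have hoff : ∀ i : Fin (d + 1), x * θ i + y = 0 := by
    intro i
    have he := congrFun (congrFun hm (i + 1)) i
    have hne : (i + 1) ≠ i := fin_succ_ne hd i
    simp only [Matrix.add_apply, Matrix.smul_apply, Matrix.mul_diagonal, Matrix.zero_apply,
      Matrix.diagonal_apply_ne _ hne, Matrix.one_apply_ne hne, smul_eq_mul, mul_zero,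
      add_zero] at he
    have hfac : Mb (i + 1) i * (x * θ i + y) = 0 := by linear_combination he
    exact (mul_eq_zero.mp hfac).resolve_left (cb_succ hAb i)
  have hx : x = 0 := by
    have h0 := hoff 0
    have h1 := hoff 1
    have : x * (θ 0 - θ 1) = 0 := by linear_combination h0 - h1
    exact (mul_eq_zero.mp this).resolve_right (sub_ne_zero.mpr hθ)
  have hy : y = 0 := by
    have h0 := hoff 0
    rw [hx, zero_mul, zero_add] at h0
    exact h0
  have hdiagc : ∀ i : Fin (d + 1), z * θ i + w = 0 := by
    intro i
    have he := congrFun (congrFun hm i) i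
    simp only [Matrix.add_apply, Matrix.smul_apply, Matrix.mul_diagonal, Matrix.zero_apply,
      Matrix.diagonal_apply_eq, Matrix.one_apply_eq, smul_eq_mul, mul_one] at he
    rw [hx, hy] at he
    linear_combination he
  have hz : z = 0 := by
    have h0 := hdiagc 0
    have h1 := hdiagc 1
    have : z * (θ 0 - θ 1) = 0 := by linear_combination h0 - h1
    exact (mul_eq_zero.mp this).resolve_right (sub_ne_zero.mpr hθ)
  have hw : w = 0 := by
    have h0 := hdiagc 0
    rw [hz, zero_mul, zero_add] at h0
    exact h0
  exact ⟨hx, hy, hz, hw⟩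

end main

open Polynomial

theorem stmt15 {F V : Type*} [Field F] [AddCommGroup V] [Module F V]
    [FiniteDimensional F V] (d : ℕ) (hd : 1 ≤ d) (hdim : Module.finrank F V = d + 1)
    (A Astar : Module.End F V) (hpair : IsCBPair d A Astar) :
    ∃! t : F × F × F × F,
      t.1 • (A * Astar) - Astar * A + t.2.1 • A - t.2.2.1 • Astar =
        t.2.2.2 • (1 : Module.End F V) := by
  obtain ⟨⟨b, hAb, hAsbdiag⟩, ⟨b', hAsb', hAb'diag⟩⟩ := hpair
  set θ : Fin (d + 1) → F := fun i => LinearMap.toMatrix b b Astar i i with hθdef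
  have hAsb : LinearMap.toMatrix b b Astar = Matrix.diagonal θ := isDiag_eq_diagonal hAsbdiag
  set θs : Fin (d + 1) → F := fun i => LinearMap.toMatrix b' b' A i i with hθsdef
  have hAb'd : LinearMap.toMatrix b' b' A = Matrix.diagonal θs := isDiag_eq_diagonal hAb'diag
  have hθinj : Function.Injective θ := theta_inj hd Astar b b' hAsb hAsb'
  have hθ01 : θ 0 ≠ θ 1 := fun hc => fin_one_ne_zero hd (hθinj hc).symm
  have hΦb : ∀ f : Module.End F V,
      LinearMap.toMatrixAlgEquiv b f = LinearMap.toMatrix b b f := fun _ => rfl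
  have hΦb' : ∀ f : Module.End F V,
      LinearMap.toMatrixAlgEquiv b' f = LinearMap.toMatrix b' b' f := fun _ => rfl
  -- θs is nonconstant
  have hθsnc : ∃ i j, θs i ≠ θs j := by
    by_contra hc
    push_neg at hc
    have hA1 : LinearMap.toMatrix b' b' A = Matrix.diagonal (fun _ => θs 0) := by
      have hfe : θs = fun _ => θs 0 := funext fun i => hc i 0
      rw [hAb'd, hfe]
    have hAop : A = θs 0 • 1 := by
      apply (LinearMap.toMatrix b' b').injective
      rw [hA1, map_smul, LinearMap.toMatrix_one]
      ext i j
      by_cases h : i = j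
      · subst h; simp
      · simp [Matrix.diagonal_apply_ne _ h, Matrix.one_apply_ne h]
    have hcorner := hAb.2.2
    rw [hAop, map_smul, LinearMap.toMatrix_one] at hcorner
    have h0l : (0 : Fin (d + 1)) ≠ Fin.last d := by
      intro h; have := congrArg Fin.val h; simp [Fin.val_last] at this; omega
    simp [Matrix.one_apply_ne h0l] at hcorner
  -- interpolation polynomials
  have hinjOn : Set.InjOn θ ↑(Finset.univ : Finset (Fin (d + 1))) := fun a _ c _ h => hθinj h
  set p : Polynomial F := Lagrange.interpolate Finset.univ θ (fun i => θ (i + 1)) with hpdef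
  set r : Polynomial F := Lagrange.interpolate Finset.univ θ
      (fun i => (LinearMap.toMatrix b b A) i i * (θ i - θ (i + 1))) with hrdef
  have hdegle : ∀ f : Fin (d + 1) → F,
      (Lagrange.interpolate Finset.univ θ f).natDegree ≤ d := by
    intro f
    by_cases h0 : Lagrange.interpolate Finset.univ θ f = 0
    · rw [h0]; simp
    · have hlt := Lagrange.degree_interpolate_lt f hinjOn
      rw [Finset.card_univ, Fintype.card_fin] at hlt
      have := (Polynomial.natDegree_lt_iff_degree_lt h0).mpr hlt
      omega
  have hdp : p.natDegree ≤ d := hdegle _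
  have hdr : r.natDegree ≤ d := hdegle _
  have hpeval : ∀ i, p.eval (θ i) = θ (i + 1) := fun i =>
    Lagrange.eval_interpolate_at_node _ hinjOn (Finset.mem_univ i)
  have hreval : ∀ i, r.eval (θ i) = (LinearMap.toMatrix b b A) i i * (θ i - θ (i + 1)) :=
    fun i => Lagrange.eval_interpolate_at_node _ hinjOn (Finset.mem_univ i)
  have haevb : ∀ s : Polynomial F, (LinearMap.toMatrixAlgEquiv b) (aeval Astar s)
      = aeval (LinearMap.toMatrix b b Astar) s := by
    intro s
    have h := aeval_algHom_apply (LinearMap.toMatrixAlgEquiv b).toAlgHom Astar s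
    exact h.symm
  have haevb' : ∀ s : Polynomial F, (LinearMap.toMatrixAlgEquiv b') (aeval Astar s)
      = aeval (LinearMap.toMatrix b' b' Astar) s := by
    intro s
    have h := aeval_algHom_apply (LinearMap.toMatrixAlgEquiv b').toAlgHom Astar s
    exact h.symm
  -- the fundamental identity in basis b
  have hG1 : Astar * A = A * (aeval Astar p) + aeval Astar r := by
    apply (LinearMap.toMatrixAlgEquiv b).injective
    rw [map_mul, map_add, map_mul, haevb, haevb, hΦb, hΦb, hAsb, aeval_diagonal, aeval_diagonal]
    have e1 : (fun i => Polynomial.eval (θ i) p) = fun i => θ (i + 1) := funext hpeval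
    have e2 : (fun i => Polynomial.eval (θ i) r)
        = fun i => (LinearMap.toMatrix b b A) i i * (θ i - θ (i + 1)) := funext hreval
    rw [e1, e2]
    exact base_identity hAb θ
  -- transport to basis b' and apply the degree bound
  have hG2 := congrArg (LinearMap.toMatrixAlgEquiv b') hG1
  rw [map_mul, map_add, map_mul, haevb', haevb', hΦb', hΦb', hAb'd] at hG2
  obtain ⟨hp1, hr1⟩ := key_deg hd hAsb' hθsnc hdp hdr hG2
  -- expand aevals
  have hpeq := Polynomial.eq_X_add_C_of_natDegree_le_one hp1
  have hreq := Polynomial.eq_X_add_C_of_natDegree_le_one hr1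
  have haevp : aeval Astar p = p.coeff 1 • Astar + p.coeff 0 • 1 := by
    conv_lhs => rw [hpeq]
    simp [Algebra.algebraMap_eq_smul_one, smul_mul_assoc]
  have haevr : aeval Astar r = r.coeff 1 • Astar + r.coeff 0 • 1 := by
    conv_lhs => rw [hreq]
    simp [Algebra.algebraMap_eq_smul_one, smul_mul_assoc]
  have e2 : Astar * A = p.coeff 1 • (A * Astar) + p.coeff 0 • A
      + r.coeff 1 • Astar + r.coeff 0 • (1 : Module.End F V) := by
    rw [hG1, haevp, haevr]
    simp only [mul_add, mul_smul_comm, mul_one]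
    abel
  refine ⟨(p.coeff 1, p.coeff 0, -(r.coeff 1), -(r.coeff 0)), ?_, ?_⟩
  · show p.coeff 1 • (A * Astar) - Astar * A + p.coeff 0 • A - (-(r.coeff 1)) • Astar
      = (-(r.coeff 0)) • (1 : Module.End F V)
    rw [e2]
    simp only [neg_smul]
    abel
  · rintro ⟨q', α', β', γ'⟩ ht'
    have e1 : Astar * A = q' • (A * Astar) + α' • A - β' • Astar
        - γ' • (1 : Module.End F V) := by
      rw [← ht']
      module
    have e3 := e1.symm.trans e2
    have hdiff : (q' - p.coeff 1) • (A * Astar) + (α' - p.coeff 0) • A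
        + (-β' - r.coeff 1) • Astar + (-γ' - r.coeff 0) • (1 : Module.End F V) = 0 := by
      rw [show (q' - p.coeff 1) • (A * Astar) + (α' - p.coeff 0) • A
          + (-β' - r.coeff 1) • Astar + (-γ' - r.coeff 0) • (1 : Module.End F V)
          = (q' • (A * Astar) + α' • A - β' • Astar - γ' • (1 : Module.End F V))
            - (p.coeff 1 • (A * Astar) + p.coeff 0 • A + r.coeff 1 • Astar
              + r.coeff 0 • (1 : Module.End F V)) from by module]
      rw [e3, sub_self]
    obtain ⟨h1, h2, h3, h4⟩ := indep hd b hAb hAsb hθ01 hdiff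
    simp only [Prod.mk.injEq]
    refine ⟨?_, ?_, ?_, ?_⟩
    · linear_combination h1
    · linear_combination h2
    · linear_combination -h3
    · linear_combination -h4
end

section
/- Let n = d+1 be prime, char(F) = n, γ ∈ F not among 0,1,…,d. Define R = R(γ) ∈ Mat_n(F) by R_{0,d} = γ, R_{i,i-1} = i+γ for 1 ≤ i ≤ d, else 0. With A = A(γ) (diagonal entries i+γ, subdiagonal −i−γ, corner −γ) and A* = diag(0,1,…,d): (i) A* − A + γI = R = AA* − A*A; (ii) (A−I)R = RA and (A*−I)R = RA*; (iii) R^{n} = (γ)_{n}·I = γ(γ+1)⋯(γ+d)·I, which is a nonzero scalar times I, so R is invertible. -/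
open Fin.NatCast Fin.CommRing

/-- The Pochhammer symbol `(a)_r = a(a+1)⋯(a+r-1)`. -/
def poch {F : Type*} [Field F] (a : F) (r : ℕ) : F :=
  ∏ ℓ ∈ Finset.range r, (a + ℓ)

lemma cyclic_pow {F : Type*} [Field F] (n : ℕ) [NeZero n] (w : Fin n → F) (k : ℕ) :
    (Matrix.of fun i j : Fin n => if i = j + 1 then w i else 0) ^ k
      = Matrix.of fun i j : Fin n =>
        if i = j + (k : Fin n) then ∏ ℓ ∈ Finset.range k, w (j + ℓ + 1) else 0 := by
  induction k with
  | zero => ext i j; simp [Matrix.one_apply]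
  | succ k ih =>
      rw [pow_succ, ih]
      ext i j
      rw [Matrix.mul_apply]
      rw [Finset.sum_eq_single (j + 1)]
      · simp only [Matrix.of_apply, if_pos rfl]
        have hc : j + 1 + (k : Fin n) = j + ((k + 1 : ℕ) : Fin n) := by push_cast; ring
        rw [hc]
        split_ifs with h
        · rw [Finset.prod_range_succ']
          congr 1
          · apply Finset.prod_congr rfl; intro ℓ _; congr 1; push_cast; ring
          · congr 1; push_cast; ring
        · exact zero_mul _
      · intro b _ hb
        simp only [Matrix.of_apply]
        rw [if_neg (fun hh => hb hh), mul_zero]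
      · simp

theorem stmt19 {F : Type*} [Field F] (d : ℕ) (hd : 1 ≤ d)
    (hprime : Nat.Prime (d + 1)) (hchar : CharP F (d + 1)) (γ : F)
    (hγ : ∀ i : ℕ, i ≤ d → γ ≠ (i : F))
    (A Astar R : Matrix (Fin (d + 1)) (Fin (d + 1)) F)
    (hA : A = Matrix.of fun i j : Fin (d + 1) =>
      if i.val = j.val then (i.val : F) + γ
      else if i.val = j.val + 1 then -(i.val : F) - γ
      else if i.val = 0 ∧ j.val = d then -γ else 0)
    (hAstar : Astar = Matrix.diagonal fun i : Fin (d + 1) => (i.val : F))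
    (hR : R = Matrix.of fun i j : Fin (d + 1) =>
      if i.val = j.val + 1 then (i.val : F) + γ
      else if i.val = 0 ∧ j.val = d then γ else 0) :
    (Astar - A + γ • 1 = R ∧ R = A * Astar - Astar * A) ∧
      ((A - 1) * R = R * A ∧ (Astar - 1) * R = R * Astar) ∧
      (R ^ (d + 1) = poch γ (d + 1) • (1 : Matrix (Fin (d + 1)) (Fin (d + 1)) F) ∧
        poch γ (d + 1) ≠ 0 ∧ IsUnit R) := by
  have hdF : ((d : ℕ) : F) = -1 := by
    have h0 : ((d + 1 : ℕ) : F) = 0 := CharP.cast_eq_zero F (d + 1)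
    push_cast at h0
    linear_combination h0
  -- (i) first identity, entrywise
  have hE1 : Astar - A + γ • 1 = R := by
    rw [hA, hAstar, hR]
    ext i j
    simp only [Matrix.sub_apply, Matrix.add_apply, Matrix.smul_apply, Matrix.of_apply,
      Matrix.diagonal_apply, Matrix.one_apply, smul_eq_mul, mul_ite, mul_one, mul_zero]
    have hi := i.isLt
    have hj := j.isLt
    by_cases h3 : i = j
    · subst h3
      rw [if_pos rfl, if_pos rfl, if_pos rfl, if_neg (by omega), if_neg (by omega)]
      ring
    · have h3' : ¬ i.val = j.val := fun h => h3 (Fin.ext h)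
      rw [if_neg h3, if_neg h3', if_neg h3]
      by_cases h1 : i.val = j.val + 1
      · rw [if_pos h1, if_pos h1]; ring
      · rw [if_neg h1, if_neg h1]
        by_cases h2 : i.val = 0 ∧ j.val = d
        · rw [if_pos h2, if_pos h2]; ring
        · rw [if_neg h2, if_neg h2]; ring
  -- (i) second identity, entrywise
  have hE2 : R = A * Astar - Astar * A := by
    rw [hA, hAstar, hR]
    ext i j
    simp only [Matrix.mul_diagonal, Matrix.diagonal_mul, Matrix.sub_apply, Matrix.of_apply]
    have hi := i.isLt
    have hj := j.isLt
    by_cases h3 : i.val = j.val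
    · have hc : (i.val : F) = (j.val : F) := by rw [h3]
      rw [if_neg (by omega), if_neg (by omega), if_pos h3, hc]
      ring
    · rw [if_neg h3]
      by_cases h1 : i.val = j.val + 1
      · have hc : (i.val : F) = (j.val : F) + 1 := by rw [h1]; push_cast; ring
        rw [if_pos h1, if_pos h1, hc]
        ring
      · rw [if_neg h1, if_neg h1]
        by_cases h2 : i.val = 0 ∧ j.val = d
        · have hc1 : (i.val : F) = 0 := by rw [h2.1]; simp
          have hc2 : (j.val : F) = -1 := by rw [h2.2]; exact hdF
          rw [if_pos h2, if_pos h2, hc1, hc2]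
          ring
        · rw [if_neg h2, if_neg h2]; ring
  -- (ii) by algebra from (i)
  have hA' : A = Astar + γ • 1 - R := by
    rw [eq_sub_iff_add_eq, ← hE1]; abel
  have hkey : Astar * R = R + R * Astar := by
    have h : A * Astar - Astar * A = Astar * R - R * Astar := by
      rw [hA']
      simp only [sub_mul, add_mul, mul_sub, mul_add, smul_mul_assoc, mul_smul_comm,
        one_mul, mul_one]
      abel
    have h2 : Astar * R - R * Astar = R := (hE2.trans h).symm
    have h3 : Astar * R = R + R * Astar := sub_eq_iff_eq_add.mp h2
    exact h3
  have hii2 : (Astar - 1) * R = R * Astar := by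
    rw [sub_mul, one_mul, hkey]; abel
  have hii1 : (A - 1) * R = R * A := by
    rw [hA']
    simp only [sub_mul, add_mul, mul_sub, mul_add, smul_mul_assoc, mul_smul_comm,
      one_mul, mul_one]
    rw [hkey]; abel
  -- cyclic form of R
  have hv : ∀ j : Fin (d + 1), (j + 1 : Fin (d + 1)).val = (j.val + 1) % (d + 1) := by
    intro j
    rw [Fin.val_add, Fin.val_one', Nat.mod_eq_of_lt (show 1 < d + 1 by omega)]
  have hRc : R = Matrix.of fun i j : Fin (d + 1) =>
      if i = j + 1 then ((i.val : F) + γ) else 0 := by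
    rw [hR]
    ext i j
    simp only [Matrix.of_apply]
    have hi := i.isLt
    have hj := j.isLt
    by_cases hjd : j.val = d
    · have h0 : (j + 1 : Fin (d + 1)).val = 0 := by rw [hv, hjd, Nat.mod_self]
      by_cases hi0 : i.val = 0
      · rw [if_neg (by omega), if_pos ⟨hi0, hjd⟩, if_pos (by rw [Fin.ext_iff, h0, hi0])]
        rw [hi0]; simp
      · rw [if_neg (by omega), if_neg (by tauto), if_neg (by rw [Fin.ext_iff, h0]; omega)]
    · have h1 : (j + 1 : Fin (d + 1)).val = j.val + 1 := by
        rw [hv, Nat.mod_eq_of_lt (by omega)]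
      by_cases hij : i.val = j.val + 1
      · rw [if_pos hij, if_pos (by rw [Fin.ext_iff, h1, hij])]
      · rw [if_neg hij, if_neg (by tauto), if_neg (by rw [Fin.ext_iff, h1]; omega)]
  -- the product identity
  have hprod : ∀ j : Fin (d + 1),
      (∏ ℓ ∈ Finset.range (d + 1), (((j + (ℓ : Fin (d + 1)) + 1).val : F) + γ))
        = poch γ (d + 1) := by
    intro j
    rw [← Fin.prod_univ_eq_prod_range (fun ℓ : ℕ => (((j + (ℓ : Fin (d + 1)) + 1).val : F) + γ))]
    simp only [Fin.cast_val_eq_self]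
    have e1 : ∀ m : Fin (d + 1), j + m + 1 = (Equiv.addLeft (j + 1)) m := by
      intro m; simp [Equiv.addLeft]; ring
    calc (∏ m : Fin (d + 1), (((j + m + 1).val : F) + γ))
        = ∏ m : Fin (d + 1), ((((Equiv.addLeft (j + 1)) m).val : F) + γ) := by
          apply Finset.prod_congr rfl; intro m _; rw [e1]
      _ = ∏ m : Fin (d + 1), ((m.val : F) + γ) :=
          Equiv.prod_comp (Equiv.addLeft (j + 1)) (fun m => ((m.val : F) + γ))
      _ = poch γ (d + 1) := by
          rw [poch, ← Fin.prod_univ_eq_prod_range (fun ℓ : ℕ => γ + (ℓ : F))]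
          apply Finset.prod_congr rfl; intro m _; ring
  have hpow : R ^ (d + 1) = poch γ (d + 1) • (1 : Matrix (Fin (d + 1)) (Fin (d + 1)) F) := by
    rw [hRc, cyclic_pow]
    ext i j
    simp only [Matrix.of_apply, Matrix.smul_apply, Matrix.one_apply, smul_eq_mul,
      mul_ite, mul_one, mul_zero]
    have hz : ((d + 1 : ℕ) : Fin (d + 1)) = 0 := Fin.natCast_self (d + 1)
    rw [hz, add_zero]
    split_ifs with h
    · exact hprod j
    · rfl
  have hpoch : poch γ (d + 1) ≠ 0 := by
    rw [poch]
    apply Finset.prod_ne_zero_iff.mpr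
    intro ℓ hℓ
    rw [Finset.mem_range] at hℓ
    intro hcon
    rcases Nat.eq_zero_or_pos ℓ with h0 | hpos
    · subst h0
      refine hγ 0 (Nat.zero_le d) ?_
      push_cast at hcon ⊢
      linear_combination hcon
    · have hcast : ((d + 1 - ℓ : ℕ) : F) + ((ℓ : ℕ) : F) = 0 := by
        rw [← Nat.cast_add, Nat.sub_add_cancel (by omega)]
        exact CharP.cast_eq_zero F (d + 1)
      exact hγ (d + 1 - ℓ) (by omega) (by linear_combination hcon - hcast)
  have hunit : IsUnit R := by
    rw [← isUnit_pow_succ_iff (n := d)]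
    rw [hpow]
    rw [← Algebra.algebraMap_eq_smul_one]
    exact hpoch.isUnit.map (algebraMap F (Matrix (Fin (d + 1)) (Fin (d + 1)) F))
  exact ⟨⟨hE1, hE2⟩, ⟨hii1, hii2⟩, hpow, hpoch, hunit⟩
end
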